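/- arXiv:2011.08830 — 5 statements merged into one kernel-verified Lean document; each statement's English description precedes it below -/
import Mathlib

section
/- Let d0, d1, d2, d3 be nonnegative integers and set D := d1 + d2 + d3 − d0 (an integer, possibly negative). Then in ℚ(s) one has the identity ∑_{k ≥ 0} [D choose k]_s · [D − k choose d1]_s · [D − k choose d2]_s · [D − k choose d3]_s · [d0 choose k + 2d0 − d1 − d2 − d3]_s = [d3 choose d0 − d1]_s · [d3 choose d0 − d2]_s · [d0 choose d3]_s · [D choose d3]_s, where the sum is finite because all but finitely many terms vanish. -/
open scoped BigOperators

/-- The balanced `q`-integer `[n]_s := s^n - s^{-n}` in the field `ℚ(s)` of rational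
functions, where `s` plays the role of `q^{1/2}`. -/
noncomputable def qint (n : ℤ) : RatFunc ℚ := RatFunc.X ^ n - RatFunc.X ^ (-n)

/-- The balanced `q`-factorial `[n]_s! := ∏_{j=1}^n [j]_s` in `ℚ(s)`. -/
noncomputable def qfact (n : ℕ) : RatFunc ℚ := ∏ j ∈ Finset.range n, qint (j + 1)

/-- The balanced `q`-binomial coefficient `[n choose m]_s`, equal to
`[n]_s!/([m]_s! [n-m]_s!)` if `0 ≤ m ≤ n` and `0` otherwise. -/
noncomputable def qbinom (n m : ℤ) : RatFunc ℚ :=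
  if 0 ≤ m ∧ m ≤ n then qfact n.toNat / (qfact m.toNat * qfact (n - m).toNat) else 0

namespace QPS

local notation "X" => (RatFunc.X : RatFunc ℚ)

lemma X_ne_zero : X ≠ 0 := RatFunc.X_ne_zero

lemma Xpow_ne_zero (n : ℤ) : X ^ n ≠ 0 := zpow_ne_zero n X_ne_zero

lemma X_npow_ne_one {n : ℕ} (hn : n ≠ 0) : X ^ n ≠ 1 := by
  intro h
  have h1 : (algebraMap (Polynomial ℚ) (RatFunc ℚ)) (Polynomial.X ^ n) =
      (algebraMap (Polynomial ℚ) (RatFunc ℚ)) 1 := by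
    simpa [map_pow, RatFunc.algebraMap_X] using h
  have h2 : (Polynomial.X : Polynomial ℚ) ^ n = 1 := RatFunc.algebraMap_injective ℚ h1
  have h3 := congrArg (Polynomial.eval 0) h2
  simp [Polynomial.eval_pow, zero_pow hn] at h3

lemma qint_neg (n : ℤ) : qint (-n) = - qint n := by simp only [qint, neg_neg]; ring

lemma qint_zero : qint 0 = 0 := by simp [qint]

lemma qint_ne_zero {n : ℤ} (hn : n ≠ 0) : qint n ≠ 0 := by
  have main : ∀ m : ℕ, m ≠ 0 → qint (m : ℤ) ≠ 0 := by
    intro m hm h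
    have hx : X ^ (m:ℤ) = X ^ (-(m:ℤ)) := sub_eq_zero.mp h
    have h4 : X ^ ((m:ℤ) + m) = 1 := by
      rw [zpow_add₀ X_ne_zero]
      nth_rewrite 1 [hx]
      rw [← zpow_add₀ X_ne_zero]
      simp
    have h5 : X ^ (m + m) = 1 := by
      rw [← zpow_natCast X (m + m)]; push_cast; exact h4
    exact X_npow_ne_one (by omega) h5
  rcases lt_or_gt_of_ne hn with h | h
  · intro hz
    rw [show n = -(-n) by ring, qint_neg, neg_eq_zero] at hz
    exact main (-n).toNat (by omega) (by rwa [Int.toNat_of_nonneg (by omega)])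
  · intro hz
    exact main n.toNat (by omega) (by rwa [Int.toNat_of_nonneg (by omega)])

lemma qfact_succ (n : ℕ) : qfact (n + 1) = qfact n * qint (n + 1) := by
  simp [qfact, Finset.prod_range_succ]

lemma qfact_zero : qfact 0 = 1 := by simp [qfact]

lemma qfact_ne_zero (n : ℕ) : qfact n ≠ 0 := by
  induction n with
  | zero => simp [qfact_zero]
  | succ k ih =>
      rw [qfact_succ]
      exact mul_ne_zero ih (qint_ne_zero (by exact_mod_cast Nat.succ_ne_zero k))

/-- `qbinom` on natural inputs, in range. -/
lemma qbinom_nat {n m : ℕ} (h : m ≤ n) :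
    qbinom n m = qfact n / (qfact m * qfact (n - m)) := by
  have h1 : (0:ℤ) ≤ (m:ℤ) ∧ (m:ℤ) ≤ (n:ℤ) := ⟨by positivity, by exact_mod_cast h⟩
  rw [qbinom, if_pos h1]
  have e1 : ((n:ℤ)).toNat = n := Int.toNat_natCast n
  have e2 : ((m:ℤ)).toNat = m := Int.toNat_natCast m
  have e3 : ((n:ℤ) - (m:ℤ)).toNat = n - m := by omega
  rw [e1, e2, e3]

lemma qbinom_of_neg {n m : ℤ} (h : m < 0) : qbinom n m = 0 := by
  rw [qbinom, if_neg]; omega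

lemma qbinom_of_gt {n m : ℤ} (h : n < m) : qbinom n m = 0 := by
  rw [qbinom, if_neg]; omega

lemma qbinom_of_neg_left {n m : ℤ} (h : n < 0) : qbinom n m = 0 := by
  rw [qbinom, if_neg]; omega

lemma qbinom_zero_right (n : ℕ) : qbinom n 0 = 1 := by
  rw [show ((0:ℤ)) = ((0:ℕ):ℤ) by simp, qbinom_nat (Nat.zero_le n)]
  simp [qfact_zero, div_self (qfact_ne_zero n)]

lemma qbinom_self (n : ℕ) : qbinom n n = 1 := by
  rw [qbinom_nat (le_refl n)]
  simp [qfact_zero, div_self (qfact_ne_zero n)]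



lemma qint_pascal (u v : ℤ) : qint (u+v) = X^(-u) * qint v + X^v * qint u := by
  simp only [qint, mul_sub]
  rw [← zpow_add₀ X_ne_zero, ← zpow_add₀ X_ne_zero, ← zpow_add₀ X_ne_zero,
    ← zpow_add₀ X_ne_zero]
  rw [show (-u)+v = -(u-v) from by ring, show (-u)+(-v) = -(u+v) from by ring,
    show v+u = u+v from by ring, show v+(-u) = -(u-v) from by ring]
  ring

/-- Identity (A): `[n, m-1]·[n-m+1] = [n, m]·[m]`, unconditional. -/
lemma qbinom_A (n : ℕ) (m : ℤ) :
    qbinom n (m-1) * qint ((n:ℤ) - m + 1) = qbinom n m * qint m := by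
  by_cases h1 : m ≤ 0
  · have hR : qbinom n m * qint m = 0 := by
      rcases eq_or_lt_of_le h1 with rfl | h2
      · simp [qint_zero]
      · rw [qbinom_of_neg h2, zero_mul]
    rw [qbinom_of_neg (show m - 1 < 0 by omega), zero_mul, hR]
  · by_cases h2 : (n:ℤ) < m
    · rw [qbinom_of_gt h2, zero_mul]
      rcases eq_or_lt_of_le (show (n:ℤ) + 1 ≤ m by omega) with he | hl
      · rw [show (n:ℤ) - m + 1 = 0 by omega, qint_zero, mul_zero]
      · rw [qbinom_of_gt (show (n:ℤ) < m - 1 by omega), zero_mul]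
    · push_neg at h1 h2
      obtain ⟨p, q, hm_eq, hn_eq⟩ : ∃ p q : ℕ, m = (p:ℤ)+1 ∧ n = p + 1 + q :=
        ⟨(m-1).toNat, ((n:ℤ)-m).toNat, by omega, by omega⟩
      subst hn_eq
      rw [hm_eq]
      rw [show ((p:ℤ)+1)-1 = ((p:ℕ):ℤ) from by ring]
      rw [show ((p+1+q:ℕ):ℤ) - ((p:ℤ)+1) + 1 = ((q+1:ℕ):ℤ) from by push_cast; ring]
      rw [show ((p:ℤ)+1) = ((p+1:ℕ):ℤ) from by push_cast; ring]
      rw [qbinom_nat (show p ≤ p+1+q by omega), qbinom_nat (show p+1 ≤ p+1+q by omega)]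
      rw [show p+1+q-p = q+1 by omega, show p+1+q-(p+1) = q by omega]
      rw [qfact_succ q, qfact_succ p]
      push_cast
      have h3 := qfact_ne_zero p
      have h4 := qfact_ne_zero q
      have h5 := qfact_ne_zero (p+1+q)
      have h6 := qint_ne_zero (show ((q:ℤ)+1) ≠ 0 by omega)
      have h7 := qint_ne_zero (show ((p:ℤ)+1) ≠ 0 by omega)
      field_simp

/-- Identity (B'): `[n]·[n-1, m] = [n-m]·[n, m]`, unconditional. -/
lemma qbinom_B (n : ℕ) (m : ℤ) :
    qint n * qbinom ((n:ℤ)-1) m = qint ((n:ℤ) - m) * qbinom n m := by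
  by_cases h1 : m < 0
  · rw [qbinom_of_neg h1, qbinom_of_neg h1, mul_zero, mul_zero]
  · by_cases h2 : (n:ℤ) ≤ m
    · rcases eq_or_lt_of_le h2 with he | hl
      · rw [qbinom_of_gt (show (n:ℤ)-1 < m by omega), mul_zero,
          show (n:ℤ) - m = 0 by omega, qint_zero, zero_mul]
      · rw [qbinom_of_gt (show (n:ℤ)-1 < m by omega), mul_zero,
          qbinom_of_gt hl, mul_zero]
    · push_neg at h1 h2
      obtain ⟨mm, q, hm_eq, hn_eq⟩ : ∃ mm q : ℕ, m = (mm:ℤ) ∧ n = mm + q + 1 :=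
        ⟨m.toNat, ((n:ℤ)-m-1).toNat, by omega, by omega⟩
      subst hn_eq
      rw [hm_eq]
      rw [show ((mm+q+1:ℕ):ℤ) - 1 = ((mm+q:ℕ):ℤ) from by push_cast; ring]
      rw [show ((mm+q+1:ℕ):ℤ) - (mm:ℤ) = ((q+1:ℕ):ℤ) from by push_cast; ring]
      rw [qbinom_nat (show mm ≤ mm+q by omega), qbinom_nat (show mm ≤ mm+q+1 by omega)]
      rw [show mm+q-mm = q by omega, show mm+q+1-mm = q+1 by omega]
      rw [show mm+q+1 = (mm+q)+1 by omega, qfact_succ (mm+q), qfact_succ q]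
      push_cast
      have h3 := qfact_ne_zero mm
      have h4 := qfact_ne_zero q
      have h5 := qfact_ne_zero (mm+q)
      have h6 := qint_ne_zero (show ((q:ℤ)+1) ≠ 0 by omega)
      have h7 := qint_ne_zero (show ((mm:ℤ)+(q:ℤ)+1) ≠ 0 by omega)
      field_simp

/-- Pascal's rule (form B), unconditional. -/
lemma qbinom_pascal (n : ℕ) (m : ℤ) :
    qbinom ((n:ℤ)+1) m = X^(-m) * qbinom n m + X^((n:ℤ)+1-m) * qbinom n (m-1) := by
  by_cases h1 : m < 0
  · rw [qbinom_of_neg h1, qbinom_of_neg h1, qbinom_of_neg (show m - 1 < 0 by omega)]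
    ring
  · by_cases h0 : m = 0
    · subst h0
      have e1 : qbinom ((n:ℤ)+1) 0 = 1 := by
        rw [show ((n:ℤ)+1) = ((n+1:ℕ):ℤ) from by push_cast; ring]
        exact qbinom_zero_right (n+1)
      rw [e1, qbinom_zero_right n, qbinom_of_neg (show (0:ℤ)-1 < 0 by norm_num)]
      norm_num
    · by_cases h2 : (n:ℤ) + 1 ≤ m
      · rcases eq_or_lt_of_le h2 with he | hl
        · rw [← he]
          rw [show ((n:ℤ)+1) = ((n+1:ℕ):ℤ) from by push_cast; ring]
          rw [qbinom_self (n+1)]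
          rw [show ((n+1:ℕ):ℤ) = (n:ℤ)+1 from by push_cast; ring]
          rw [qbinom_of_gt (show (n:ℤ) < (n:ℤ)+1 by omega),
            show (n:ℤ)+1-((n:ℤ)+1) = 0 from by ring,
            show (n:ℤ)+1-1 = ((n:ℕ):ℤ) from by ring, qbinom_self n]
          simp
        · rw [qbinom_of_gt (show (n:ℤ) < m by omega),
            qbinom_of_gt (show (n:ℤ) < m - 1 by omega),
            qbinom_of_gt (show (n:ℤ)+1 < m by omega)]
          ring
      · push_neg at h1 h0 h2
        obtain ⟨p, q, hm_eq, hn_eq⟩ : ∃ p q : ℕ, m = (p:ℤ)+1 ∧ n = p + 1 + q :=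
          ⟨(m-1).toNat, ((n:ℤ)-m).toNat, by omega, by omega⟩
        subst hn_eq
        rw [hm_eq]
        rw [show ((p+1+q:ℕ):ℤ) + 1 = ((p+1+q+1:ℕ):ℤ) from by push_cast; ring]
        rw [show ((p:ℤ)+1) = ((p+1:ℕ):ℤ) from by push_cast; ring]
        rw [show ((p+1+q+1:ℕ):ℤ) - ((p+1:ℕ):ℤ) = ((q+1:ℕ):ℤ) from by push_cast; ring]
        rw [show ((p+1:ℕ):ℤ) - 1 = ((p:ℕ):ℤ) from by push_cast; ring]
        rw [qbinom_nat (show p+1 ≤ p+1+q+1 by omega),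
          qbinom_nat (show p+1 ≤ p+1+q by omega),
          qbinom_nat (show p ≤ p+1+q by omega)]
        rw [show p+1+q+1-(p+1) = q+1 by omega, show p+1+q-(p+1) = q by omega,
          show p+1+q-p = q+1 by omega]
        have key : qint ((p+1+q+1:ℕ):ℤ) =
            X^(-((p+1:ℕ):ℤ)) * qint ((q+1:ℕ):ℤ) + X^(((q+1:ℕ)):ℤ) * qint ((p+1:ℕ):ℤ) := by
          rw [show ((p+1+q+1:ℕ):ℤ) = ((p+1:ℕ):ℤ) + ((q+1:ℕ):ℤ) from by push_cast; ring]
          exact qint_pascal _ _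
        rw [show p+1+q+1 = (p+1+q)+1 by omega, qfact_succ (p+1+q), qfact_succ p, qfact_succ q]
        have h3 := qfact_ne_zero p
        have h4 := qfact_ne_zero q
        have h5 := qfact_ne_zero (p+1+q)
        have h6 := qint_ne_zero (show ((q:ℤ)+1) ≠ 0 by omega)
        have h7 := qint_ne_zero (show ((p:ℤ)+1) ≠ 0 by omega)
        have h8 := Xpow_ne_zero (-((p+1:ℕ):ℤ))
        rw [show ((p+1+q:ℕ):ℤ)+1 = ((p+1+q+1:ℕ):ℤ) from by push_cast; ring, key]
        push_cast
        field_simp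

/-- Symmetry: `[n, m] = [n, n-m]`. -/
lemma qbinom_symm (n : ℕ) (m : ℤ) : qbinom n m = qbinom n ((n:ℤ) - m) := by
  by_cases h1 : m < 0
  · rw [qbinom_of_neg h1, qbinom_of_gt (show (n:ℤ) < (n:ℤ) - m by omega)]
  · by_cases h2 : (n:ℤ) < m
    · rw [qbinom_of_gt h2, qbinom_of_neg (show (n:ℤ) - m < 0 by omega)]
    · push_neg at h1 h2
      obtain ⟨mm, hm_eq, hle⟩ : ∃ mm : ℕ, m = (mm:ℤ) ∧ mm ≤ n :=
        ⟨m.toNat, by omega, by omega⟩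
      rw [hm_eq, show (n:ℤ) - (mm:ℤ) = ((n - mm:ℕ):ℤ) from by push_cast [hle]; ring]
      rw [qbinom_nat hle, qbinom_nat (show n - mm ≤ n by omega)]
      rw [show n - (n - mm) = mm by omega]
      ring

/-- Trinomial revision: `[n, j]·[j, k] = [n, k]·[n-k, j-k]`. -/
lemma qbinom_tri (n k : ℕ) (j : ℤ) :
    qbinom n j * qbinom j k = qbinom n k * qbinom ((n:ℤ) - k) (j - k) := by
  by_cases h1 : j < 0
  · rw [qbinom_of_neg h1, zero_mul, qbinom_of_neg (show j - k < 0 by omega), mul_zero]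
  · by_cases h2 : (n:ℤ) < j
    · rw [qbinom_of_gt h2, zero_mul,
        qbinom_of_gt (show (n:ℤ) - k < j - k by omega), mul_zero]
    · push_neg at h1 h2
      obtain ⟨jj, hj_eq, hle⟩ : ∃ jj : ℕ, j = (jj:ℤ) ∧ jj ≤ n :=
        ⟨j.toNat, by omega, by omega⟩
      subst hj_eq
      by_cases h3 : (jj:ℤ) < k
      · rw [qbinom_of_gt h3, mul_zero, qbinom_of_neg (show (jj:ℤ) - k < 0 by omega), mul_zero]
      · push_neg at h3
        have hk : k ≤ jj := by exact_mod_cast h3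
        rw [show ((n:ℤ) - (k:ℤ)) = ((n-k:ℕ):ℤ) from by push_cast [hk.trans hle]; ring,
          show ((jj:ℤ) - (k:ℤ)) = ((jj-k:ℕ):ℤ) from by push_cast [hk]; ring]
        rw [qbinom_nat hle, qbinom_nat hk, qbinom_nat (hk.trans hle),
          qbinom_nat (show jj - k ≤ n - k by omega)]
        rw [show n - k - (jj - k) = n - jj by omega]
        have h3 := qfact_ne_zero k
        have h4 := qfact_ne_zero jj
        have h5 := qfact_ne_zero (n-jj)
        have h6 := qfact_ne_zero (jj-k)
        have h7 := qfact_ne_zero (n-k)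
        have h8 := qfact_ne_zero n
        field_simp

/-- The WZ certificate function. -/
noncomputable def Gfun (a : ℕ) (d1 d2 : ℤ) (d0 h : ℕ) (i : ℕ) : RatFunc ℚ :=
  -(qint ((h:ℤ)+i) * (qbinom (a:ℤ) ((i:ℤ)-1) *
    (qbinom ((h:ℤ)+i) (d1+1) * (qbinom ((h:ℤ)+i-1) d2 * qbinom (d0:ℤ) ((h:ℤ)+i)))))

lemma Gfun_succ (a : ℕ) (d1 d2 : ℤ) (d0 h i : ℕ) :
    Gfun a d1 d2 d0 h (i+1) =
    -(qint ((h:ℤ)+i+1) * (qbinom (a:ℤ) (i:ℤ) *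
      (qbinom ((h:ℤ)+i+1) (d1+1) * (qbinom ((h:ℤ)+i) d2 * qbinom (d0:ℤ) ((h:ℤ)+i+1))))) := by
  unfold Gfun
  push_cast
  ring_nf

lemma Gfun_zero (a : ℕ) (d1 d2 : ℤ) (d0 h : ℕ) : Gfun a d1 d2 d0 h 0 = 0 := by
  unfold Gfun
  rw [qbinom_of_neg (show ((0:ℕ):ℤ) - 1 < 0 by norm_num)]
  ring

lemma Gfun_big (a : ℕ) (d1 d2 : ℤ) (d0 h N : ℕ) (hN : a + 2 ≤ N) :
    Gfun a d1 d2 d0 h N = 0 := by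
  unfold Gfun
  rw [qbinom_of_gt (show (a:ℤ) < (N:ℤ) - 1 by omega)]
  ring

/-- The core certificate identity, coefficient level. -/
lemma CIp (a h i : ℕ) (d1 x : ℤ) :
    qint ((h:ℤ)+a-x+1) * (qbinom ((a:ℤ)+1) (i:ℤ) * qbinom ((h:ℤ)+i) (d1+1))
      - qint (x-(a:ℤ)) * (qbinom (a:ℤ) (i:ℤ) * qbinom ((h:ℤ)+i) d1)
    = -(qint (d1+x-(a:ℤ)-h-i) * (qbinom (a:ℤ) (i:ℤ) * qbinom ((h:ℤ)+i+1) (d1+1)))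
      + qint ((h:ℤ)+i-x) * (qbinom (a:ℤ) ((i:ℤ)-1) * qbinom ((h:ℤ)+i) (d1+1)) := by
  have hP1 : qbinom ((a:ℤ)+1) (i:ℤ) =
      X^(-(i:ℤ)) * qbinom (a:ℤ) (i:ℤ) + X^((a:ℤ)+1-(i:ℤ)) * qbinom (a:ℤ) ((i:ℤ)-1) :=
    qbinom_pascal a (i:ℤ)
  have hP2 : qbinom ((h:ℤ)+i+1) (d1+1) =
      X^(-(d1+1)) * qbinom ((h:ℤ)+i) (d1+1) + X^((h:ℤ)+i-d1) * qbinom ((h:ℤ)+i) d1 := by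
    have h0 := qbinom_pascal (h+i) (d1+1)
    push_cast at h0
    rw [show ((h:ℤ)+i+1-(d1+1)) = (h:ℤ)+i-d1 from by ring,
      show (d1+1-1:ℤ) = d1 from by ring] at h0
    exact h0
  have hR2 : qbinom ((h:ℤ)+i) d1 * qint ((h:ℤ)+i-d1) =
      qbinom ((h:ℤ)+i) (d1+1) * qint (d1+1) := by
    have h0 := qbinom_A (h+i) (d1+1)
    push_cast at h0
    rw [show (d1+1-1:ℤ) = d1 from by ring,
      show ((h:ℤ)+i-(d1+1)+1) = (h:ℤ)+i-d1 from by ring] at h0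
    exact h0
  have hR1 : qbinom (a:ℤ) ((i:ℤ)-1) * qint ((a:ℤ)+1-(i:ℤ)) =
      qbinom (a:ℤ) (i:ℤ) * qint (i:ℤ) := by
    have h0 := qbinom_A a (i:ℤ)
    rw [show ((a:ℤ)-(i:ℤ)+1) = (a:ℤ)+1-(i:ℤ) from by ring] at h0
    exact h0
  have hS1 : -qint (x-(a:ℤ)) + X^((h:ℤ)+i-d1) * qint (d1+x-(a:ℤ)-h-i)
      = -(X^((a:ℤ)-x+h+i-d1) * qint ((h:ℤ)+i-d1)) := by
    simp only [qint, mul_sub, sub_mul, neg_mul, mul_neg, neg_sub, ← zpow_add₀ X_ne_zero]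
    ring_nf
  have hS2 : X^((a:ℤ)+1-(i:ℤ)) * qint ((h:ℤ)+a-x+1) - qint ((h:ℤ)+i-x)
      = X^((h:ℤ)+a+1-x) * qint ((a:ℤ)+1-(i:ℤ)) := by
    simp only [qint, mul_sub, sub_mul, neg_mul, mul_neg, neg_sub, ← zpow_add₀ X_ne_zero]
    ring_nf
  have hS3 : X^(-(i:ℤ)) * qint ((h:ℤ)+a-x+1) + X^(-(d1+1)) * qint (d1+x-(a:ℤ)-h-i)
      - X^((a:ℤ)-x+h+i-d1) * qint (d1+1) + X^((h:ℤ)+a+1-x) * qint (i:ℤ) = 0 := by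
    simp only [qint, mul_sub, sub_mul, neg_mul, mul_neg, neg_sub, ← zpow_add₀ X_ne_zero]
    ring_nf
  linear_combination (qint ((h:ℤ)+a-x+1) * qbinom ((h:ℤ)+i) (d1+1)) * hP1
    + (qint (d1+x-(a:ℤ)-h-i) * qbinom (a:ℤ) (i:ℤ)) * hP2
    + (-(X^((a:ℤ)-x+h+i-d1) * qbinom (a:ℤ) (i:ℤ))) * hR2
    + (X^((h:ℤ)+a+1-x) * qbinom ((h:ℤ)+i) (d1+1)) * hR1
    + (qbinom (a:ℤ) (i:ℤ) * qbinom ((h:ℤ)+i) (d1+1)) * hS3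
    + (qbinom (a:ℤ) (i:ℤ) * qbinom ((h:ℤ)+i) d1) * hS1
    + (qbinom (a:ℤ) ((i:ℤ)-1) * qbinom ((h:ℤ)+i) (d1+1)) * hS2

/-- The full certificate identity. -/
lemma CI (a h i d0 : ℕ) (d1 d2 : ℤ) (hd : (d0:ℤ) = d1 + d2 - a) :
    qint ((h:ℤ)+d1-d0+1) * (qbinom ((a:ℤ)+1) (i:ℤ) *
        (qbinom ((h:ℤ)+i) (d1+1) * (qbinom ((h:ℤ)+i) d2 * qbinom (d0:ℤ) ((h:ℤ)+i))))
      - qint ((d0:ℤ)-d1) * (qbinom (a:ℤ) (i:ℤ) *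
        (qbinom ((h:ℤ)+i) d1 * (qbinom ((h:ℤ)+i) d2 * qbinom (d0:ℤ) ((h:ℤ)+i))))
    = Gfun a d1 d2 d0 h (i+1) - Gfun a d1 d2 d0 h i := by
  rw [Gfun_succ]
  unfold Gfun
  have e3 : qbinom (d0:ℤ) ((h:ℤ)+i) * qint (d1+d2-(a:ℤ)-h-i)
      = qbinom (d0:ℤ) ((h:ℤ)+i+1) * qint ((h:ℤ)+i+1) := by
    have h0 := qbinom_A d0 ((h:ℤ)+i+1)
    rw [show ((h:ℤ)+i+1-1) = (h:ℤ)+i from by ring,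
      show ((d0:ℤ)-((h:ℤ)+i+1)+1) = (d0:ℤ)-h-i from by ring,
      show ((d0:ℤ)-h-i) = d1+d2-(a:ℤ)-h-i from by omega] at h0
    exact h0
  have e4 : qint ((h:ℤ)+i) * qbinom ((h:ℤ)+i-1) d2 = qint ((h:ℤ)+i-d2) * qbinom ((h:ℤ)+i) d2 := by
    have h0 := qbinom_B (h+i) d2
    push_cast at h0
    exact h0
  have key := CIp a h i d1 d2
  rw [show ((h:ℤ)+d1-d0+1) = (h:ℤ)+a-d2+1 from by omega,
    show ((d0:ℤ)-d1) = d2-(a:ℤ) from by omega]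
  linear_combination (qbinom ((h:ℤ)+i) d2 * qbinom (d0:ℤ) ((h:ℤ)+i)) * key
    + (-(qbinom (a:ℤ) (i:ℤ) * (qbinom ((h:ℤ)+i+1) (d1+1) * qbinom ((h:ℤ)+i) d2))) * e3
    + (-(qbinom (a:ℤ) ((i:ℤ)-1) * (qbinom ((h:ℤ)+i) (d1+1) * qbinom (d0:ℤ) ((h:ℤ)+i)))) * e4

/-- The summand of the auxiliary sum. -/
noncomputable def Fterm (a : ℕ) (d1 d2 : ℤ) (d0 h : ℕ) (i : ℕ) : RatFunc ℚ :=
  qbinom (a:ℤ) (i:ℤ) * (qbinom ((h:ℤ)+i) d1 * (qbinom ((h:ℤ)+i) d2 * qbinom (d0:ℤ) ((h:ℤ)+i)))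

lemma Fterm_zero_of_big (a : ℕ) (d1 d2 : ℤ) (d0 h : ℕ) {i : ℕ} (hi : a < i) :
    Fterm a d1 d2 d0 h i = 0 := by
  unfold Fterm
  rw [qbinom_of_gt (show (a:ℤ) < (i:ℤ) by exact_mod_cast hi), zero_mul]

/-- Telescoped recurrence at the level of sums. -/
lemma sum_rec (a h d0 : ℕ) (d1 d2 : ℤ) (hd : (d0:ℤ) = d1 + d2 - a) (N : ℕ) (hN : a + 2 ≤ N) :
    qint ((h:ℤ)+d1-d0+1) * (∑ i ∈ Finset.range N, Fterm (a+1) (d1+1) d2 d0 h i)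
    = qint ((d0:ℤ)-d1) * (∑ i ∈ Finset.range N, Fterm a d1 d2 d0 h i) := by
  have hsum : ∑ i ∈ Finset.range N,
      (qint ((h:ℤ)+d1-d0+1) * Fterm (a+1) (d1+1) d2 d0 h i
        - qint ((d0:ℤ)-d1) * Fterm a d1 d2 d0 h i) = 0 := by
    have step : ∀ i ∈ Finset.range N,
        qint ((h:ℤ)+d1-d0+1) * Fterm (a+1) (d1+1) d2 d0 h i
          - qint ((d0:ℤ)-d1) * Fterm a d1 d2 d0 h i
        = Gfun a d1 d2 d0 h (i+1) - Gfun a d1 d2 d0 h i := by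
      intro i _
      have h0 := CI a h i d0 d1 d2 hd
      unfold Fterm
      rw [show ((a+1:ℕ):ℤ) = (a:ℤ)+1 from by push_cast; ring]
      exact h0
    rw [Finset.sum_congr rfl step, Finset.sum_range_sub (fun i => Gfun a d1 d2 d0 h i),
      Gfun_big a d1 d2 d0 h N hN, Gfun_zero, sub_zero]
  rw [Finset.sum_sub_distrib] at hsum
  rw [← Finset.mul_sum, ← Finset.mul_sum] at hsum
  rw [sub_eq_zero] at hsum
  exact hsum

/-- Extend the sum for `Fterm a` by one vanishing term. -/
lemma sum_ext (a h d0 : ℕ) (d1 d2 : ℤ) :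
    ∑ i ∈ Finset.range (a+2), Fterm a d1 d2 d0 h i
    = ∑ i ∈ Finset.range (a+1), Fterm a d1 d2 d0 h i := by
  rw [Finset.sum_range_succ, Fterm_zero_of_big a d1 d2 d0 h (by omega), add_zero]

lemma Tpp (a : ℕ) : ∀ d2 d0 h : ℕ,
    ∑ i ∈ Finset.range (a+1), Fterm a ((a:ℤ)+d0-d2) (d2:ℤ) d0 h i
    = qbinom (h:ℤ) ((d2:ℤ)-a) * (qbinom (h:ℤ) ((d0:ℤ)-d2) * qbinom (d0:ℤ) (h:ℤ)) := by
  induction a with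
  | zero =>
      intro d2 d0 h
      rw [Finset.sum_range_one]
      unfold Fterm
      simp only [Nat.cast_zero, add_zero, zero_add, sub_zero]
      have h00 : qbinom (0:ℤ) (0:ℤ) = 1 := by simpa using qbinom_self 0
      rw [h00]
      ring
  | succ a ih =>
      intro d2 d0 h
      rw [show ((a+1:ℕ):ℤ)+(d0:ℤ)-(d2:ℤ) = ((a:ℤ)+(d0:ℤ)-(d2:ℤ))+1 from by push_cast; ring,
        show ((d2:ℤ)-((a+1:ℕ):ℤ)) = (d2:ℤ)-(a:ℤ)-1 from by push_cast; ring]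
      by_cases hA : (h:ℤ)+(a:ℤ)-(d2:ℤ)+1 = 0
      · -- degenerate cases B and C
        have hd2ge : 1 ≤ d2 := by omega
        by_cases hB : (h:ℤ) = (d0:ℤ)-(d2:ℤ)
        · -- Case C : single surviving term
          have hd2 : d2 = h+a+1 := by omega
          have hd0 : d0 = h+d2 := by omega
          rw [Finset.sum_range_succ]
          have hzero : ∑ i ∈ Finset.range (a+1), Fterm (a+1) (((a:ℤ)+(d0:ℤ)-(d2:ℤ))+1) (d2:ℤ) d0 h i = 0 := by
            refine Finset.sum_eq_zero (fun i hi => ?_)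
            have hi' : i < a+1 := Finset.mem_range.mp hi
            unfold Fterm
            rw [qbinom_of_gt (show (h:ℤ)+(i:ℤ) < (d2:ℤ) by omega)]
            ring
          rw [hzero, zero_add]
          unfold Fterm
          have c1 : qbinom ((a+1:ℕ):ℤ) ((a+1:ℕ):ℤ) = 1 := qbinom_self (a+1)
          rw [c1]
          rw [show ((h:ℤ)+((a+1:ℕ):ℤ)) = ((d2:ℕ):ℤ) from by push_cast; omega]
          rw [show (((a:ℤ)+(d0:ℤ)-(d2:ℤ))+1) = ((d2:ℕ):ℤ) from by push_cast; omega]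
          rw [qbinom_self d2]
          rw [show ((d2:ℤ)-(a:ℤ)-1) = ((h:ℕ):ℤ) from by push_cast; omega]
          rw [show ((d0:ℤ)-(d2:ℤ)) = ((h:ℕ):ℤ) from by push_cast; omega]
          rw [qbinom_self h]
          have hsymm : qbinom (d0:ℤ) ((d2:ℕ):ℤ) = qbinom (d0:ℤ) ((h:ℕ):ℤ) := by
            rw [qbinom_symm d0 ((d2:ℕ):ℤ), show ((d0:ℤ)-(d2:ℤ)) = ((h:ℕ):ℤ) from by push_cast; omega]
          rw [hsymm]
          ring
        · -- Case B : twin recurrence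
          have hB' : ((h:ℤ)+(d2:ℤ)-(d0:ℤ)) ≠ 0 := by omega
          have hgoalswap : ∑ i ∈ Finset.range (a+1+1), Fterm (a+1) ((d2:ℤ)-1+1) ((a:ℤ)+1+(d0:ℤ)-(d2:ℤ)) d0 h i
              = ∑ i ∈ Finset.range (a+1+1), Fterm (a+1) (((a:ℤ)+(d0:ℤ)-(d2:ℤ))+1) (d2:ℤ) d0 h i := by
            refine Finset.sum_congr rfl (fun i _ => ?_)
            unfold Fterm
            rw [show ((d2:ℤ)-1+1) = (d2:ℤ) from by ring,
              show ((a:ℤ)+1+(d0:ℤ)-(d2:ℤ)) = ((a:ℤ)+(d0:ℤ)-(d2:ℤ))+1 from by ring]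
            ring
          have hlowswap : ∑ i ∈ Finset.range (a+1), Fterm a ((d2:ℤ)-1) ((a:ℤ)+1+(d0:ℤ)-(d2:ℤ)) d0 h i
              = ∑ i ∈ Finset.range (a+1), Fterm a ((a:ℤ)+(d0:ℤ)-((d2-1:ℕ):ℤ)) ((d2-1:ℕ):ℤ) d0 h i := by
            refine Finset.sum_congr rfl (fun i _ => ?_)
            unfold Fterm
            rw [Nat.cast_sub hd2ge, Nat.cast_one]
            rw [show ((a:ℤ)+(d0:ℤ)-((d2:ℤ)-1)) = (a:ℤ)+1+(d0:ℤ)-(d2:ℤ) from by ring]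
            ring
          have hrec2 := sum_rec a h d0 ((d2:ℤ)-1) ((a:ℤ)+1+(d0:ℤ)-(d2:ℤ))
            (by push_cast; ring) (a+1+1) (by omega)
          rw [hgoalswap, sum_ext, hlowswap, ih (d2-1) d0 h] at hrec2
          rw [show ((h:ℤ)+((d2:ℤ)-1)-(d0:ℤ)+1) = (h:ℤ)+(d2:ℤ)-(d0:ℤ) from by ring,
            show ((d0:ℤ)-((d2:ℤ)-1)) = (d0:ℤ)-(d2:ℤ)+1 from by ring] at hrec2
          rw [Nat.cast_sub hd2ge, Nat.cast_one,
            show ((d2:ℤ)-1-(a:ℤ)) = ((h:ℕ):ℤ) from by omega,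
            show ((d0:ℤ)-((d2:ℤ)-1)) = (d0:ℤ)-(d2:ℤ)+1 from by ring,
            qbinom_self h] at hrec2
          rw [show ((d2:ℤ)-(a:ℤ)-1) = ((h:ℕ):ℤ) from by omega, qbinom_self h]
          have hswap2 := qbinom_A h ((d0:ℤ)-(d2:ℤ)+1)
          rw [show ((d0:ℤ)-(d2:ℤ)+1-1) = (d0:ℤ)-(d2:ℤ) from by ring,
            show ((h:ℤ)-((d0:ℤ)-(d2:ℤ)+1)+1) = (h:ℤ)+(d2:ℤ)-(d0:ℤ) from by ring] at hswap2
          refine mul_left_cancel₀ (qint_ne_zero hB') ?_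
          linear_combination hrec2 - qbinom (d0:ℤ) (h:ℤ) * hswap2
      · -- Case A : main recurrence
        have hrec := sum_rec a h d0 ((a:ℤ)+(d0:ℤ)-(d2:ℤ)) (d2:ℤ)
          (by push_cast; ring) (a+1+1) (by omega)
        rw [sum_ext, ih d2 d0 h,
          show ((h:ℤ)+((a:ℤ)+(d0:ℤ)-(d2:ℤ))-(d0:ℤ)+1) = (h:ℤ)+(a:ℤ)-(d2:ℤ)+1 from by ring,
          show ((d0:ℤ)-((a:ℤ)+(d0:ℤ)-(d2:ℤ))) = (d2:ℤ)-(a:ℤ) from by ring] at hrec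
        have hswap := qbinom_A h ((d2:ℤ)-(a:ℤ))
        rw [show ((h:ℤ)-((d2:ℤ)-(a:ℤ))+1) = (h:ℤ)+(a:ℤ)-(d2:ℤ)+1 from by ring] at hswap
        refine mul_left_cancel₀ (qint_ne_zero hA) ?_
        linear_combination hrec - (qbinom ((h:ℤ)) ((d0:ℤ)-(d2:ℤ)) * qbinom (d0:ℤ) (h:ℤ)) * hswap

end QPS

open QPS in
/-- The `q`-Pfaff–Saalschütz-type identity (Theorem 4.4 for `dP₃(1,1)`): for nonnegative
integers `d0, d1, d2, d3` and `D = d1 + d2 + d3 - d0`,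
`∑_{k ≥ 0} [D,k][D-k,d1][D-k,d2][D-k,d3][d0, k+2d0-d1-d2-d3]
 = [d3, d0-d1][d3, d0-d2][d0, d3][D, d3]` in `ℚ(s)`. -/
theorem stmt0 (d0 d1 d2 d3 : ℕ) (D : ℤ) (hD : D = (d1 : ℤ) + d2 + d3 - d0) :
    (∑ᶠ k : ℕ,
      qbinom D (k : ℤ) * qbinom (D - (k : ℤ)) (d1 : ℤ) * qbinom (D - (k : ℤ)) (d2 : ℤ) *
        qbinom (D - (k : ℤ)) (d3 : ℤ) *
        qbinom (d0 : ℤ) ((k : ℤ) + 2 * (d0 : ℤ) - (d1 : ℤ) - (d2 : ℤ) - (d3 : ℤ)))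
    = qbinom (d3 : ℤ) ((d0 : ℤ) - (d1 : ℤ)) * qbinom (d3 : ℤ) ((d0 : ℤ) - (d2 : ℤ)) *
        qbinom (d0 : ℤ) (d3 : ℤ) * qbinom D (d3 : ℤ) := by
  classical
  subst hD
  by_cases hD0 : (d1 : ℤ) + d2 + d3 - d0 < 0
  · have hz : ∀ k : ℕ,
        qbinom ((d1:ℤ)+d2+d3-d0) (k : ℤ) * qbinom (((d1:ℤ)+d2+d3-d0) - (k : ℤ)) (d1 : ℤ) *
          qbinom (((d1:ℤ)+d2+d3-d0) - (k : ℤ)) (d2 : ℤ) *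
          qbinom (((d1:ℤ)+d2+d3-d0) - (k : ℤ)) (d3 : ℤ) *
          qbinom (d0 : ℤ) ((k : ℤ) + 2 * (d0 : ℤ) - (d1 : ℤ) - (d2 : ℤ) - (d3 : ℤ)) = 0 := by
      intro k
      rw [qbinom_of_neg_left hD0]
      ring
    rw [finsum_eq_zero_of_forall_eq_zero hz, qbinom_of_neg_left hD0, mul_zero]
  · push_neg at hD0
    by_cases ha : d1 + d2 < d0
    · have hz : ∀ k : ℕ,
          qbinom ((d1:ℤ)+d2+d3-d0) (k : ℤ) * qbinom (((d1:ℤ)+d2+d3-d0) - (k : ℤ)) (d1 : ℤ) *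
            qbinom (((d1:ℤ)+d2+d3-d0) - (k : ℤ)) (d2 : ℤ) *
            qbinom (((d1:ℤ)+d2+d3-d0) - (k : ℤ)) (d3 : ℤ) *
            qbinom (d0 : ℤ) ((k : ℤ) + 2 * (d0 : ℤ) - (d1 : ℤ) - (d2 : ℤ) - (d3 : ℤ)) = 0 := by
        intro k
        by_cases hk : (k:ℤ) ≤ (d1:ℤ)+d2+d3-d0
        · rw [qbinom_of_gt (show ((d1:ℤ)+d2+d3-d0) - (k:ℤ) < (d3:ℤ) by omega)]
          ring
        · rw [qbinom_of_gt (show ((d1:ℤ)+d2+d3-d0) < (k:ℤ) by omega)]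
          ring
      rw [finsum_eq_zero_of_forall_eq_zero hz,
        qbinom_of_gt (show ((d1:ℤ)+d2+d3-d0) < (d3:ℤ) by omega), mul_zero]
    · push_neg at ha
      set an : ℕ := d1 + d2 - d0 with han
      have hanZ : (an:ℤ) = (d1:ℤ) + d2 - d0 := by omega
      -- convert finsum to a finite sum
      have hsupp : (Function.support (fun k : ℕ =>
          qbinom ((d1:ℤ)+d2+d3-d0) (k : ℤ) * qbinom (((d1:ℤ)+d2+d3-d0) - (k : ℤ)) (d1 : ℤ) *
            qbinom (((d1:ℤ)+d2+d3-d0) - (k : ℤ)) (d2 : ℤ) *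
            qbinom (((d1:ℤ)+d2+d3-d0) - (k : ℤ)) (d3 : ℤ) *
            qbinom (d0 : ℤ) ((k : ℤ) + 2 * (d0 : ℤ) - (d1 : ℤ) - (d2 : ℤ) - (d3 : ℤ))))
          ⊆ ↑(Finset.range (an + d3 + 1)) := by
        intro k hk
        simp only [Finset.coe_range, Set.mem_Iio]
        by_contra hge
        push_neg at hge
        apply hk
        show qbinom ((d1:ℤ)+d2+d3-d0) (k : ℤ) * qbinom (((d1:ℤ)+d2+d3-d0) - (k : ℤ)) (d1 : ℤ) *
            qbinom (((d1:ℤ)+d2+d3-d0) - (k : ℤ)) (d2 : ℤ) *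
            qbinom (((d1:ℤ)+d2+d3-d0) - (k : ℤ)) (d3 : ℤ) *
            qbinom (d0 : ℤ) ((k : ℤ) + 2 * (d0 : ℤ) - (d1 : ℤ) - (d2 : ℤ) - (d3 : ℤ)) = 0
        rw [qbinom_of_gt (show ((d1:ℤ)+d2+d3-d0) < (k:ℤ) by omega)]
        ring
      rw [finsum_eq_sum_of_support_subset _ hsupp]
      rw [← Finset.sum_range_reflect]
      have hstep1 : ∀ j ∈ Finset.range (an + d3 + 1),
          (fun k : ℕ =>
            qbinom ((d1:ℤ)+d2+d3-d0) (k : ℤ) * qbinom (((d1:ℤ)+d2+d3-d0) - (k : ℤ)) (d1 : ℤ) *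
              qbinom (((d1:ℤ)+d2+d3-d0) - (k : ℤ)) (d2 : ℤ) *
              qbinom (((d1:ℤ)+d2+d3-d0) - (k : ℤ)) (d3 : ℤ) *
              qbinom (d0 : ℤ) ((k : ℤ) + 2 * (d0 : ℤ) - (d1 : ℤ) - (d2 : ℤ) - (d3 : ℤ)))
            (an + d3 + 1 - 1 - j)
          = qbinom ((an+d3:ℕ):ℤ) (d3:ℤ) *
            (qbinom (an:ℤ) ((j:ℤ)-(d3:ℤ)) *
              (qbinom (j:ℤ) (d1:ℤ) * (qbinom (j:ℤ) (d2:ℤ) * qbinom (d0:ℤ) (j:ℤ)))) := by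
        intro j hj
        have hjle : j ≤ an + d3 := by
          have := Finset.mem_range.mp hj; omega
        show qbinom ((d1:ℤ)+d2+d3-d0) ((an+d3+1-1-j:ℕ) : ℤ) *
            qbinom (((d1:ℤ)+d2+d3-d0) - ((an+d3+1-1-j:ℕ) : ℤ)) (d1 : ℤ) *
            qbinom (((d1:ℤ)+d2+d3-d0) - ((an+d3+1-1-j:ℕ) : ℤ)) (d2 : ℤ) *
            qbinom (((d1:ℤ)+d2+d3-d0) - ((an+d3+1-1-j:ℕ) : ℤ)) (d3 : ℤ) *
            qbinom (d0 : ℤ) (((an+d3+1-1-j:ℕ) : ℤ) + 2 * (d0 : ℤ) - (d1 : ℤ) - (d2 : ℤ) - (d3 : ℤ)) = _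
        rw [show an + d3 + 1 - 1 - j = an + d3 - j by omega]
        rw [show ((an+d3-j:ℕ):ℤ) = (an:ℤ)+(d3:ℤ)-(j:ℤ) from by push_cast [hjle]; ring]
        rw [show ((d1:ℤ)+d2+d3-d0) - ((an:ℤ)+(d3:ℤ)-(j:ℤ)) = (j:ℤ) from by omega]
        rw [show ((an:ℤ)+(d3:ℤ)-(j:ℤ)) + 2 * (d0:ℤ) - d1 - d2 - d3 = (d0:ℤ) - j from by omega]
        rw [show ((d1:ℤ)+d2+d3-d0) = ((an+d3:ℕ):ℤ) from by push_cast; omega]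
        rw [show ((an:ℤ)+(d3:ℤ)-(j:ℤ)) = ((an+d3:ℕ):ℤ)-(j:ℤ) from by push_cast; ring]
        rw [← qbinom_symm (an+d3) (j:ℤ), ← qbinom_symm d0 (j:ℤ)]
        have htri := qbinom_tri (an+d3) d3 (j:ℤ)
        rw [show ((an+d3:ℕ):ℤ)-(d3:ℤ) = (an:ℤ) from by push_cast; ring] at htri
        linear_combination (qbinom (j:ℤ) (d1:ℤ) * (qbinom (j:ℤ) (d2:ℤ) * qbinom (d0:ℤ) (j:ℤ))) * htri
      rw [Finset.sum_congr rfl hstep1]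
      rw [← Finset.mul_sum]
      rw [show an + d3 + 1 = d3 + (an + 1) by omega]
      rw [Finset.sum_range_add (fun j =>
        qbinom (an:ℤ) ((j:ℤ)-(d3:ℤ)) *
          (qbinom (j:ℤ) (d1:ℤ) * (qbinom (j:ℤ) (d2:ℤ) * qbinom (d0:ℤ) (j:ℤ)))) d3 (an+1)]
      have hfirst : ∑ j ∈ Finset.range d3,
          qbinom (an:ℤ) ((j:ℤ)-(d3:ℤ)) *
            (qbinom (j:ℤ) (d1:ℤ) * (qbinom (j:ℤ) (d2:ℤ) * qbinom (d0:ℤ) (j:ℤ))) = 0 := by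
        refine Finset.sum_eq_zero (fun j hj => ?_)
        have : j < d3 := Finset.mem_range.mp hj
        rw [qbinom_of_neg (show (j:ℤ)-(d3:ℤ) < 0 by omega), zero_mul]
      have hsecond : ∀ i ∈ Finset.range (an+1),
          qbinom (an:ℤ) (((d3+i:ℕ):ℤ)-(d3:ℤ)) *
            (qbinom ((d3+i:ℕ):ℤ) (d1:ℤ) *
              (qbinom ((d3+i:ℕ):ℤ) (d2:ℤ) * qbinom (d0:ℤ) ((d3+i:ℕ):ℤ)))
          = Fterm an ((an:ℤ)+d0-d2) (d2:ℤ) d0 d3 i := by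
        intro i _
        unfold Fterm
        rw [show ((d3+i:ℕ):ℤ) = (d3:ℤ)+(i:ℤ) from by push_cast; ring]
        rw [show ((d3:ℤ)+(i:ℤ))-(d3:ℤ) = (i:ℤ) from by ring]
        rw [show (d1:ℤ) = (an:ℤ)+(d0:ℤ)-(d2:ℤ) from by omega]
      rw [hfirst, zero_add, Finset.sum_congr rfl hsecond, Tpp an d2 d0 d3]
      rw [show ((an+d3:ℕ):ℤ) = (d1:ℤ)+d2+d3-d0 from by push_cast; omega]
      rw [show ((d2:ℤ)-(an:ℤ)) = (d0:ℤ)-(d1:ℤ) from by omega]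
      ring
end

section
/- Let d, m, n be positive integers with d ∣ m and m ∣ n, let ω ∈ ℂ be a primitive d-th root of unity, and let G(q) := binom(n, m)_q ∈ ℤ[q] be the Gaussian binomial polynomial. Then 2ω·G′(ω) = m(n − m)·G(ω), where G′ is the formal derivative of G. Equivalently, the derivative of the balanced q-binomial q^{−m(n−m)/2}·binom(n, m)_q vanishes at q = ω. -/
open scoped BigOperators

/-- `G` is the Gaussian binomial polynomial `binom(n, m)_q ∈ ℤ[q]`, characterised by the
product formula `binom(n,m)_q = ∏_{j=1}^m (1 - q^{n-m+j})/(1 - q^j)` for `m ≤ n`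
(written multiplicatively to stay inside `ℤ[q]`), and by `binom(n,m)_q = 0` for `m > n`. -/
def IsGaussBinom (n m : ℕ) (G : Polynomial ℤ) : Prop :=
  if m ≤ n then
    G * ∏ j ∈ Finset.range m, (1 - Polynomial.X ^ (j + 1)) =
      ∏ j ∈ Finset.range m, (1 - Polynomial.X ^ (n - m + (j + 1)))
  else G = 0

open Polynomial Finset

lemma evalDerivProd {ι : Type} (ω : ℂ) (s : Finset ι) (f : ι → Polynomial ℂ)
    (h : ∀ j ∈ s, eval ω (f j) ≠ 0) :
    eval ω (derivative (∏ j ∈ s, f j)) =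
      eval ω (∏ j ∈ s, f j) *
        ∑ j ∈ s, eval ω (derivative (f j)) / eval ω (f j) := by
  classical
  induction s using Finset.cons_induction with
  | empty => simp
  | cons a s ha ih =>
    have hfa : eval ω (f a) ≠ 0 := h a (Finset.mem_cons_self a s)
    have hs : ∀ j ∈ s, eval ω (f j) ≠ 0 := fun j hj => h j (Finset.mem_cons_of_mem hj)
    rw [Finset.prod_cons, Finset.sum_cons, derivative_mul, eval_add, eval_mul, eval_mul,
      eval_mul, ih hs]
    field_simp

lemma geomExtract (d K : ℕ) :
    (1 : Polynomial ℂ) - X ^ (d * K) = (1 - X ^ d) * ∑ i ∈ Finset.range K, X ^ (d * i) := by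
  have h1 := mul_geom_sum ((X : Polynomial ℂ) ^ d) K
  have h2 : (X : Polynomial ℂ) ^ (d * K) = ((X : Polynomial ℂ) ^ d) ^ K := pow_mul X d K
  have h3 : ∑ i ∈ Finset.range K, (X : Polynomial ℂ) ^ (d * i)
      = ∑ i ∈ Finset.range K, ((X : Polynomial ℂ) ^ d) ^ i :=
    Finset.sum_congr rfl fun i _ => pow_mul X d i
  rw [h3]
  linear_combination h1

lemma pairSum (m : ℕ) (ω : ℂ) (hω0 : ω ≠ 0) (hωm : ω ^ m = 1)
    (S : Finset ℕ) (hS : ∀ j, j ∈ S ↔ j < m ∧ ω ^ (j + 1) ≠ 1)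
    (hSsym : ∀ j ∈ S, m - j - 2 ∈ S) (hjlt : ∀ j ∈ S, j + 1 < m) :
    2 * ∑ j ∈ S, ω ^ (j + 1) / (1 - ω ^ (j + 1)) = -(S.card : ℂ) := by
  have hre : ∑ j ∈ S, ω ^ (j + 1) / (1 - ω ^ (j + 1))
      = ∑ j ∈ S, ω ^ (m - j - 1) / (1 - ω ^ (m - j - 1)) := by
    apply Finset.sum_nbij' (fun j => m - j - 2) (fun j => m - j - 2)
    · exact hSsym
    · exact hSsym
    · intro a haS; have := hjlt a haS; omega
    · intro a haS; have := hjlt a haS; omega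
    · intro a haS
      have h1 : m - (m - a - 2) - 1 = a + 1 := by have := hjlt a haS; omega
      rw [h1]
  rw [two_mul]
  nth_rewrite 2 [hre]
  rw [← Finset.sum_add_distrib]
  have hpt : ∀ j ∈ S, ω ^ (j + 1) / (1 - ω ^ (j + 1)) + ω ^ (m - j - 1) / (1 - ω ^ (m - j - 1))
      = -1 := by
    intro j hj
    have hz1 : ω ^ (j + 1) ≠ 1 := ((hS j).1 hj).2
    have hz0 : ω ^ (j + 1) ≠ 0 := pow_ne_zero _ hω0
    have hmul : ω ^ (j + 1) * ω ^ (m - j - 1) = 1 := by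
      rw [← pow_add]
      have : j + 1 + (m - j - 1) = m := by have := hjlt j hj; omega
      rw [this, hωm]
    have hinv : ω ^ (m - j - 1) = (ω ^ (j + 1))⁻¹ :=
      (inv_eq_of_mul_eq_one_right hmul).symm
    rw [hinv]
    have hne : (1 : ℂ) - ω ^ (j + 1) ≠ 0 := sub_ne_zero.mpr (Ne.symm hz1)
    have hne2 : (1 : ℂ) - (ω ^ (j + 1))⁻¹ ≠ 0 := by
      rw [sub_ne_zero]
      intro h
      exact hz1 (by rw [← inv_inv (ω ^ (j+1)), ← h, inv_one])
    set z := ω ^ (j + 1) with hzdef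
    clear_value z
    have hne3 : (-1 : ℂ) + z ≠ 0 := fun h => hz1 (by linear_combination h)
    field_simp
    ring
  rw [Finset.sum_congr rfl hpt, Finset.sum_const]
  simp

open Polynomial Finset

lemma imageLemma (d m m' : ℕ) (hd : 0 < d) (hm : m = d * m') :
    (Finset.range m).filter (fun j => d ∣ (j + 1))
      = (Finset.range m').image (fun k => d * (k + 1) - 1) := by
  ext j
  simp only [Finset.mem_filter, Finset.mem_range, Finset.mem_image]
  constructor
  · rintro ⟨hjm, c, hc⟩
    have hc1 : 1 ≤ c := by
      rcases Nat.eq_zero_or_pos c with h | h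
      · subst h; omega
      · exact h
    have hcle : c ≤ m' := by
      by_contra h
      push_neg at h
      have h3 : d * (m' + 1) ≤ d * c := Nat.mul_le_mul_left d h
      have h4 : d * (m' + 1) = d * m' + d := by ring
      omega
    refine ⟨c - 1, by omega, ?_⟩
    have h1 : c - 1 + 1 = c := by omega
    rw [h1, ← hc]
    omega
  · rintro ⟨k, hk, rfl⟩
    have h1 : 0 < d * (k + 1) := Nat.mul_pos hd (Nat.succ_pos k)
    have h2 : d * (k + 1) ≤ d * m' := Nat.mul_le_mul_left d (by omega)
    constructor
    · omega
    · have : d * (k + 1) - 1 + 1 = d * (k + 1) := by omega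
      rw [this]
      exact Dvd.intro _ rfl

lemma injLemma (d : ℕ) (hd : 0 < d) (s : Finset ℕ) :
    ∀ x ∈ s, ∀ y ∈ s, d * (x + 1) - 1 = d * (y + 1) - 1 → x = y := by
  intro x _ y _ h
  have hx : 0 < d * (x + 1) := Nat.mul_pos hd (Nat.succ_pos x)
  have hy : 0 < d * (y + 1) := Nat.mul_pos hd (Nat.succ_pos y)
  have := Nat.pred_inj hx hy h
  have := Nat.eq_of_mul_eq_mul_left hd this
  omega

set_option maxHeartbeats 1000000 in
/-- Lemma 7.3: for positive integers `d ∣ m ∣ n` and `ω` a primitive `d`-th root of unity,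
the Gaussian binomial `G = binom(n,m)_q` satisfies `2 ω G'(ω) = m (n - m) G(ω)`. -/
theorem stmt2 (d m n : ℕ) (hd : 0 < d) (hm : 0 < m) (hn : 0 < n)
    (hdm : d ∣ m) (hmn : m ∣ n) (ω : ℂ) (hω : IsPrimitiveRoot ω d)
    (G : Polynomial ℤ) (hG : IsGaussBinom n m G) :
    2 * ω * Polynomial.aeval ω (Polynomial.derivative G) =
      (m : ℂ) * ((n : ℂ) - (m : ℂ)) * Polynomial.aeval ω G := by
  classical
  obtain ⟨m', hm'⟩ := hdm
  have hdn : d ∣ n := ⟨m' * (n / m), by rw [← mul_assoc, ← hm', Nat.mul_div_cancel' hmn]⟩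
  have hmle : m ≤ n := Nat.le_of_dvd hn hmn
  obtain ⟨w, hw⟩ := Nat.dvd_sub hdn (Dvd.intro m' hm'.symm)
  -- basic facts about ω
  have hωd : ω ^ d = 1 := hω.pow_eq_one
  have hω0 : ω ≠ 0 := hω.ne_zero hd.ne'
  have hωm : ω ^ m = 1 := by rw [hm', pow_mul, hωd, one_pow]
  have hωnm : ω ^ (n - m) = 1 := by rw [hw, pow_mul, hωd, one_pow]
  have hpow1 : ∀ l : ℕ, ω ^ l = 1 ↔ d ∣ l := hω.pow_eq_one_iff_dvd
  -- the master polynomial identity over ℂ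
  rw [IsGaussBinom, if_pos hmle] at hG
  set Gc : Polynomial ℂ := G.map (algebraMap ℤ ℂ) with hGcdef
  have hA : Gc * ∏ j ∈ Finset.range m, (1 - (X : Polynomial ℂ) ^ (j + 1))
      = ∏ j ∈ Finset.range m, (1 - (X : Polynomial ℂ) ^ (n - m + (j + 1))) := by
    have := congrArg (Polynomial.map (algebraMap ℤ ℂ)) hG
    simpa [Polynomial.map_mul, Polynomial.map_prod, Polynomial.map_sub, Polynomial.map_pow,
      Polynomial.map_one, Polynomial.map_X, hGcdef] using this
  -- the index sets
  set S : Finset ℕ := (Finset.range m).filter (fun j => ¬ d ∣ (j + 1)) with hSdef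
  set T : Finset ℕ := (Finset.range m).filter (fun j => d ∣ (j + 1)) with hTdef
  have hTim : T = (Finset.range m').image (fun k => d * (k + 1) - 1) := imageLemma d m m' hd hm'
  have hminj := injLemma d hd (Finset.range m')
  have hsucc : ∀ k : ℕ, d * (k + 1) - 1 + 1 = d * (k + 1) :=
    fun k => Nat.succ_pred_eq_of_pos (Nat.mul_pos hd (Nat.succ_pos k))
  -- σ polynomials
  set σ : ℕ → Polynomial ℂ := fun K => ∑ i ∈ Finset.range K, (X : Polynomial ℂ) ^ (d * i)
    with hσdef
  -- the four products
  set PP : Polynomial ℂ := ∏ j ∈ S, (1 - (X : Polynomial ℂ) ^ (j + 1)) with hPPdef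
  set QQ : Polynomial ℂ := ∏ j ∈ S, (1 - (X : Polynomial ℂ) ^ (n - m + (j + 1))) with hQQdef
  set HH : Polynomial ℂ := ∏ k ∈ Finset.range m', σ (k + 1) with hHHdef
  set FF : Polynomial ℂ := ∏ k ∈ Finset.range m', σ (w + (k + 1)) with hFFdef
  -- split the range-m products
  have hsplit0 : ∀ f : ℕ → Polynomial ℂ,
      (∏ j ∈ T, f j) * ∏ j ∈ S, f j = ∏ j ∈ Finset.range m, f j := by
    intro f
    rw [hTdef, hSdef]
    exact Finset.prod_filter_mul_prod_filter_not (Finset.range m) _ f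
  have hTprod : ∀ w' : ℕ, ∏ j ∈ T, (1 - (X : Polynomial ℂ) ^ (d * w' + (j + 1)))
      = (1 - X ^ d) ^ m' * ∏ k ∈ Finset.range m', σ (w' + (k + 1)) := by
    intro w'
    rw [hTim, Finset.prod_image hminj]
    have hcong : ∀ k ∈ Finset.range m',
        (1 - (X : Polynomial ℂ) ^ (d * w' + (d * (k + 1) - 1 + 1)))
          = (1 - X ^ d) * σ (w' + (k + 1)) := by
      intro k _
      rw [hsucc k]
      have e : d * w' + d * (k + 1) = d * (w' + (k + 1)) := by ring
      rw [e]
      exact geomExtract d (w' + (k + 1))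
    rw [Finset.prod_congr rfl hcong, Finset.prod_mul_distrib, Finset.prod_const,
      Finset.card_range]
  have hsplitP : ∏ j ∈ Finset.range m, (1 - (X : Polynomial ℂ) ^ (j + 1))
      = PP * ((1 - X ^ d) ^ m' * HH) := by
    rw [← hsplit0 (fun j => 1 - (X : Polynomial ℂ) ^ (j + 1))]
    have h1 := hTprod 0
    simp only [Nat.mul_zero, Nat.zero_add, zero_add] at h1
    rw [h1, hHHdef, hPPdef]
    ring
  have hsplitQ : ∏ j ∈ Finset.range m, (1 - (X : Polynomial ℂ) ^ (n - m + (j + 1)))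
      = QQ * ((1 - X ^ d) ^ m' * FF) := by
    rw [← hsplit0 (fun j => 1 - (X : Polynomial ℂ) ^ (n - m + (j + 1)))]
    have h1 : ∏ j ∈ T, (1 - (X : Polynomial ℂ) ^ (n - m + (j + 1)))
        = (1 - X ^ d) ^ m' * ∏ k ∈ Finset.range m', σ (w + (k + 1)) := by
      rw [hw]
      exact hTprod w
    rw [h1, hFFdef, hQQdef]
    ring
  -- cancel (1 - X^d)^m'
  have hpne : ((1 : Polynomial ℂ) - X ^ d) ^ m' ≠ 0 := by
    apply pow_ne_zero
    intro h
    have := congrArg (Polynomial.eval 0) h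
    simp [zero_pow hd.ne'] at this
  have hII : Gc * PP * HH = QQ * FF := by
    have h1 : ((1 - X ^ d) ^ m') * (Gc * PP * HH) = ((1 - X ^ d) ^ m') * (QQ * FF) := by
      rw [hsplitP] at hA
      rw [hsplitQ] at hA
      linear_combination hA
    exact mul_left_cancel₀ hpne h1
  -- evaluations of the basic factors
  have hfactne : ∀ j ∈ S, (1 : ℂ) - ω ^ (j + 1) ≠ 0 := by
    intro j hj
    have hj' : ¬ d ∣ (j + 1) := (Finset.mem_filter.mp hj).2
    exact sub_ne_zero.mpr fun h => hj' ((hpow1 (j + 1)).mp h.symm)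
  have hexpshift : ∀ t : ℕ, ω ^ (n - m + t) = ω ^ t := by
    intro t; rw [pow_add, hωnm, one_mul]
  have hσev : ∀ K : ℕ, Polynomial.eval ω (σ K) = (K : ℂ) := by
    intro K
    rw [hσdef]
    rw [Polynomial.eval_finset_sum]
    rw [Finset.sum_congr rfl (fun i _ => by
      rw [Polynomial.eval_pow, Polynomial.eval_X, pow_mul, hωd, one_pow] :
      ∀ i ∈ Finset.range K, Polynomial.eval ω ((X : Polynomial ℂ) ^ (d * i)) = 1)]
    simp
  have hσdev : ∀ K : ℕ, 2 * ω * Polynomial.eval ω (Polynomial.derivative (σ (K + 1)))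
      = (d : ℂ) * ((K : ℂ) + 1) * (K : ℂ) := by
    intro K
    have hbody : σ (K + 1) = ∑ i ∈ Finset.range (K + 1), (X : Polynomial ℂ) ^ (d * i) := rfl
    rw [hbody, Polynomial.derivative_sum, Polynomial.eval_finset_sum, Finset.mul_sum]
    have hterm : ∀ i ∈ Finset.range (K + 1),
        2 * ω * Polynomial.eval ω (Polynomial.derivative ((X : Polynomial ℂ) ^ (d * i)))
          = 2 * (d : ℂ) * (i : ℂ) := by
      intro i _
      rw [Polynomial.derivative_X_pow, Polynomial.eval_mul, Polynomial.eval_C,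
        Polynomial.eval_pow, Polynomial.eval_X]
      rcases Nat.eq_zero_or_pos i with h | h
      · subst h; simp
      · have h1 : d * i - 1 + 1 = d * i := Nat.succ_pred_eq_of_pos (Nat.mul_pos hd h)
        calc 2 * ω * (((d * i : ℕ) : ℂ) * ω ^ (d * i - 1))
            = 2 * ((d * i : ℕ) : ℂ) * (ω ^ (d * i - 1) * ω) := by ring
          _ = 2 * ((d * i : ℕ) : ℂ) * ω ^ (d * i) := by rw [← pow_succ, h1]
          _ = 2 * ((d * i : ℕ) : ℂ) := by rw [pow_mul, hωd, one_pow, mul_one]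
          _ = 2 * (d : ℂ) * (i : ℂ) := by push_cast; ring
    rw [Finset.sum_congr rfl hterm]
    have hsc : ∀ i ∈ Finset.range (K + 1), 2 * (d : ℂ) * (i : ℂ) = (2 * (d : ℂ)) * ((i : ℕ) : ℂ) := by
      intro i _; ring
    rw [Finset.sum_congr rfl hsc, ← Finset.mul_sum]
    have hgauss := Finset.sum_range_id_mul_two (K + 1)
    have hgaussC : (∑ i ∈ Finset.range (K + 1), (i : ℂ)) * 2 = ((K : ℂ) + 1) * (K : ℂ) := by
      have := congrArg (Nat.cast : ℕ → ℂ) hgauss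
      push_cast at this
      simpa using this
    linear_combination (d : ℂ) * hgaussC
  -- evaluations
  set a : ℂ := Polynomial.eval ω Gc with hadef
  set a' : ℂ := Polynomial.eval ω (Polynomial.derivative Gc) with ha'def
  set p : ℂ := Polynomial.eval ω PP with hpdef
  set q : ℂ := Polynomial.eval ω QQ with hqdef
  set c : ℂ := Polynomial.eval ω HH with hcdef
  set e : ℂ := Polynomial.eval ω FF with hedef
  set Sp : ℂ := ∑ j ∈ S, Polynomial.eval ω (Polynomial.derivative (1 - (X : Polynomial ℂ) ^ (j + 1)))
      / Polynomial.eval ω (1 - (X : Polynomial ℂ) ^ (j + 1)) with hSpdef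
  set Sq : ℂ := ∑ j ∈ S, Polynomial.eval ω (Polynomial.derivative (1 - (X : Polynomial ℂ) ^ (n - m + (j + 1))))
      / Polynomial.eval ω (1 - (X : Polynomial ℂ) ^ (n - m + (j + 1))) with hSqdef
  set Sh : ℂ := ∑ k ∈ Finset.range m', Polynomial.eval ω (Polynomial.derivative (σ (k + 1)))
      / Polynomial.eval ω (σ (k + 1)) with hShdef
  set Sf : ℂ := ∑ k ∈ Finset.range m', Polynomial.eval ω (Polynomial.derivative (σ (w + (k + 1))))
      / Polynomial.eval ω (σ (w + (k + 1))) with hSfdef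
  -- nonvanishing
  have hQfactne : ∀ j ∈ S, Polynomial.eval ω (1 - (X : Polynomial ℂ) ^ (n - m + (j + 1))) ≠ 0 := by
    intro j hj
    rw [Polynomial.eval_sub, Polynomial.eval_one, Polynomial.eval_pow, Polynomial.eval_X,
      hexpshift]
    exact hfactne j hj
  have hPfactne : ∀ j ∈ S, Polynomial.eval ω (1 - (X : Polynomial ℂ) ^ (j + 1)) ≠ 0 := by
    intro j hj
    rw [Polynomial.eval_sub, Polynomial.eval_one, Polynomial.eval_pow, Polynomial.eval_X]
    exact hfactne j hj
  have hHfactne : ∀ k ∈ Finset.range m', Polynomial.eval ω (σ (k + 1)) ≠ 0 := by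
    intro k _
    rw [hσev]
    exact Nat.cast_ne_zero.mpr (Nat.succ_ne_zero k)
  have hFfactne : ∀ k ∈ Finset.range m', Polynomial.eval ω (σ (w + (k + 1))) ≠ 0 := by
    intro k _
    rw [hσev]
    exact Nat.cast_ne_zero.mpr (by omega)
  have hpne' : p ≠ 0 := by
    rw [hpdef, hPPdef, Polynomial.eval_prod]
    exact Finset.prod_ne_zero_iff.mpr hPfactne
  have hcne' : c ≠ 0 := by
    rw [hcdef, hHHdef, Polynomial.eval_prod]
    exact Finset.prod_ne_zero_iff.mpr hHfactne
  -- derivative-of-product evaluations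
  have hdPP : Polynomial.eval ω (Polynomial.derivative PP) = p * Sp := by
    rw [hPPdef, hpdef, hSpdef]; exact evalDerivProd ω S _ hPfactne
  have hdQQ : Polynomial.eval ω (Polynomial.derivative QQ) = q * Sq := by
    rw [hQQdef, hqdef, hSqdef]; exact evalDerivProd ω S _ hQfactne
  have hdHH : Polynomial.eval ω (Polynomial.derivative HH) = c * Sh := by
    rw [hHHdef, hcdef, hShdef]; exact evalDerivProd ω _ _ hHfactne
  have hdFF : Polynomial.eval ω (Polynomial.derivative FF) = e * Sf := by
    rw [hFFdef, hedef, hSfdef]; exact evalDerivProd ω _ _ hFfactne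
  -- value and derivative equations
  have hval : a * p * c = q * e := by
    have := congrArg (Polynomial.eval ω) hII
    simpa [Polynomial.eval_mul, hadef, hpdef, hcdef, hqdef, hedef] using this
  have hder : (a' * p + a * (p * Sp)) * c + (a * p) * (c * Sh) = (q * Sq) * e + q * (e * Sf) := by
    have := congrArg (fun P => Polynomial.eval ω (Polynomial.derivative P)) hII
    simp only [Polynomial.derivative_mul, Polynomial.eval_add, Polynomial.eval_mul] at this
    rw [hdPP, hdQQ, hdHH, hdFF] at this
    rw [← hadef, ← ha'def, ← hpdef, ← hqdef, ← hcdef, ← hedef] at this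
    linear_combination this
  -- sum computations
  have hjlt : ∀ j ∈ S, j + 1 < m := by
    intro j hj
    obtain ⟨hjm, hnd⟩ := Finset.mem_filter.mp hj
    rw [Finset.mem_range] at hjm
    rcases Nat.lt_or_ge (j + 1) m with h | h
    · exact h
    · exfalso
      have : j + 1 = m := by omega
      exact hnd (this ▸ ⟨m', hm'⟩)
  have hSsym : ∀ j ∈ S, m - j - 2 ∈ S := by
    intro j hj
    obtain ⟨hjm, hnd⟩ := Finset.mem_filter.mp hj
    rw [Finset.mem_range] at hjm
    have hlt := hjlt j hj
    rw [hSdef, Finset.mem_filter, Finset.mem_range]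
    constructor
    · omega
    · intro hdvd
      apply hnd
      have he : m - j - 2 + 1 = m - (j + 1) := by omega
      rw [he] at hdvd
      have h2 : d ∣ m - (m - (j + 1)) := Nat.dvd_sub ⟨m', hm'⟩ hdvd
      have h3 : m - (m - (j + 1)) = j + 1 := by omega
      rwa [h3] at h2
  have hSmem : ∀ j, j ∈ S ↔ j < m ∧ ω ^ (j + 1) ≠ 1 := by
    intro j
    rw [hSdef, Finset.mem_filter, Finset.mem_range]
    constructor
    · rintro ⟨h1, h2⟩
      exact ⟨h1, fun h => h2 ((hpow1 (j + 1)).mp h)⟩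
    · rintro ⟨h1, h2⟩
      exact ⟨h1, fun h => h2 ((hpow1 (j + 1)).mpr h)⟩
  have hpair := pairSum m ω hω0 hωm S hSmem hSsym hjlt
  have hcardT : T.card = m' := by
    rw [hTim]
    rw [Finset.card_image_of_injOn (fun x hx y hy h =>
      hminj x (Finset.mem_coe.mp hx) y (Finset.mem_coe.mp hy) h)]
    exact Finset.card_range m'
  have hcardS : S.card = m - m' := by
    have := Finset.card_filter_add_card_filter_not
      (s := Finset.range m) (p := fun j => d ∣ (j + 1))
    rw [← hTdef, ← hSdef] at this
    rw [Finset.card_range] at this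
    omega
  have hS1 : 2 * ω * (Sq - Sp) = ((n - m : ℕ) : ℂ) * ((m - m' : ℕ) : ℂ) := by
    rw [hSqdef, hSpdef, ← Finset.sum_sub_distrib, Finset.mul_sum]
    have hfactD : ∀ t : ℕ, Polynomial.eval ω (Polynomial.derivative ((1 : Polynomial ℂ) - X ^ (t + 1)))
        = -(((t + 1 : ℕ) : ℂ) * ω ^ t) := by
      intro t
      rw [Polynomial.derivative_sub, Polynomial.derivative_one, Polynomial.derivative_X_pow]
      simp [Nat.add_sub_cancel]
    have hfactE : ∀ t : ℕ, Polynomial.eval ω ((1 : Polynomial ℂ) - X ^ (t + 1)) = 1 - ω ^ (t + 1) := by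
      intro t; simp
    have hterm : ∀ j ∈ S,
        2 * ω * (Polynomial.eval ω (Polynomial.derivative ((1 : Polynomial ℂ) - X ^ (n - m + (j + 1))))
            / Polynomial.eval ω ((1 : Polynomial ℂ) - X ^ (n - m + (j + 1)))
          - Polynomial.eval ω (Polynomial.derivative ((1 : Polynomial ℂ) - X ^ (j + 1)))
            / Polynomial.eval ω ((1 : Polynomial ℂ) - X ^ (j + 1)))
        = (-((n - m : ℕ) : ℂ)) * (2 * (ω ^ (j + 1) / (1 - ω ^ (j + 1)))) := by
      intro j hj
      have he : n - m + (j + 1) = (n - m + j) + 1 := by omega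
      rw [he, hfactD, hfactE, hfactD, hfactE]
      have e1 : ω ^ (n - m + j) = ω ^ j := hexpshift j
      have e2 : ω ^ (n - m + j + 1) = ω ^ (j + 1) := by
        have h3 : n - m + j + 1 = n - m + (j + 1) := by omega
        rw [h3]; exact hexpshift (j + 1)
      rw [e1, e2]
      have hden := hfactne j hj
      have hc1 : ((n - m + j + 1 : ℕ) : ℂ) = ((n - m : ℕ) : ℂ) + (j : ℂ) + 1 := by push_cast; ring
      have hc2 : ((j + 1 : ℕ) : ℂ) = (j : ℂ) + 1 := by push_cast; ring
      rw [hc1, hc2]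
      field_simp
      ring
    rw [Finset.sum_congr rfl hterm, ← Finset.mul_sum, ← Finset.mul_sum, hpair, hcardS]
    ring
  have hS2 : 2 * ω * (Sf - Sh) = ((n - m : ℕ) : ℂ) * (m' : ℂ) := by
    rw [hSfdef, hShdef, ← Finset.sum_sub_distrib, Finset.mul_sum]
    have hterm : ∀ k ∈ Finset.range m',
        2 * ω * (Polynomial.eval ω (Polynomial.derivative (σ (w + (k + 1))))
            / Polynomial.eval ω (σ (w + (k + 1)))
          - Polynomial.eval ω (Polynomial.derivative (σ (k + 1))) / Polynomial.eval ω (σ (k + 1)))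
        = (d : ℂ) * (w : ℂ) := by
      intro k _
      have harg : w + (k + 1) = (w + k) + 1 := by omega
      rw [harg]
      have h1 := hσdev (w + k)
      have h2 := hσdev k
      rw [hσev, hσev]
      have hevF : (((w + k) + 1 : ℕ) : ℂ) ≠ 0 := Nat.cast_ne_zero.mpr (by omega)
      have hevH : ((k + 1 : ℕ) : ℂ) ≠ 0 := Nat.cast_ne_zero.mpr (by omega)
      have hcF : (((w + k) + 1 : ℕ) : ℂ) = (w : ℂ) + (k : ℂ) + 1 := by push_cast; ring
      have hcH : ((k + 1 : ℕ) : ℂ) = (k : ℂ) + 1 := by push_cast; ring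
      have hcF' : ((w + k : ℕ) : ℂ) = (w : ℂ) + (k : ℂ) := by push_cast; ring
      rw [hcF, hcH]
      have hevF' : (w : ℂ) + (k : ℂ) + 1 ≠ 0 := by rw [← hcF]; exact hevF
      have hevH' : (k : ℂ) + 1 ≠ 0 := by rw [← hcH]; exact hevH
      rw [hcF'] at h1
      field_simp
      linear_combination ((k : ℂ) + 1) * h1 - ((w : ℂ) + (k : ℂ) + 1) * h2
    rw [Finset.sum_congr rfl hterm, Finset.sum_const, Finset.card_range]
    rw [hw]
    push_cast
    ring
  -- assemble
  have hMcast : ((n - m : ℕ) : ℂ) * ((m - m' : ℕ) : ℂ) + ((n - m : ℕ) : ℂ) * (m' : ℂ)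
      = (m : ℂ) * ((n : ℂ) - (m : ℂ)) := by
    have hm'le : m' ≤ m := by
      rcases Nat.eq_zero_or_pos m' with h | h
      · omega
      · calc m' ≤ d * m' := Nat.le_mul_of_pos_left m' hd
          _ = m := hm'.symm
    rw [Nat.cast_sub hmle, Nat.cast_sub hm'le]
    ring
  have key : (2 * ω * a') * (p * c) = ((m : ℂ) * ((n : ℂ) - (m : ℂ)) * a) * (p * c) := by
    linear_combination (2 * ω) * hder - (2 * ω * (Sq + Sf)) * hval
      + (a * p * c) * hS1 + (a * p * c) * hS2 + (a * p * c) * hMcast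
  have hkey : 2 * ω * a' = (m : ℂ) * ((n : ℂ) - (m : ℂ)) * a :=
    mul_right_cancel₀ (mul_ne_zero hpne' hcne') key
  -- translate back to aeval
  have hae : Polynomial.aeval ω G = a := by
    rw [hadef, hGcdef, Polynomial.aeval_def, Polynomial.eval_map, Polynomial.eval₂_eq_eval_map]
  have hae' : Polynomial.aeval ω (Polynomial.derivative G) = a' := by
    rw [ha'def, hGcdef, Polynomial.derivative_map, Polynomial.aeval_def,
      Polynomial.eval_map]
  rw [hae, hae']
  exact hkey
end

section
/- Let a, b, d be positive integers and set n := a·b·d and m := b·d. Let ω ∈ ℂ be a primitive d-th root of unity and let E(q) := e_m(q, q², …, q^n) be the m-th elementary symmetric polynomial evaluated at the n-tuple (q, q², …, q^n). Then 2a·ω·E′(ω) = (−1)^{b+m} · n(n+1) · C(ab, b), where E′ is the derivative of the polynomial E and C denotes the ordinary binomial coefficient. -/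
open scoped BigOperators

open Polynomial Finset

noncomputable def gfun (ω : ℂ) (j : ℕ) : Polynomial ℂ := 1 + C (ω ^ (j + 1)) * X
noncomputable def Ffun (d : ℕ) : Polynomial ℂ := 1 + C ((-1 : ℂ) ^ (d + 1)) * X ^ d
noncomputable def Pip (ω : ℂ) (d r : ℕ) : Polynomial ℂ := ∏ s ∈ (range d).erase r, gfun ω s
def tau (u d r : ℕ) : ℕ := ∑ k ∈ range u, (k * d + r + 1)
noncomputable def Dfun (ω : ℂ) (u d : ℕ) : Polynomial ℂ :=
  ∑ r ∈ range d, C ((tau u d r : ℂ) * ω ^ r) * Pip ω d r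


lemma my_root_prod {ω : ℂ} {d : ℕ} (hω : IsPrimitiveRoot ω d) (hd : 0 < d) (t : ℂ) :
    ∏ r ∈ range d, (1 + ω ^ r * t) = 1 + (-1) ^ (d + 1) * t ^ d := by
  have key : ∀ y : ℂ, y ^ d - 1 = ∏ i ∈ range d, (y - ω ^ i) := by
    intro y
    have h := X_pow_sub_C_eq_prod hω hd (one_pow d)
    have h2 := congrArg (Polynomial.eval y) h
    simpa [eval_prod] using h2
  rcases eq_or_ne t 0 with rfl | ht
  · simp [zero_pow hd.ne']
  · have h1 : ∀ r : ℕ, (1 + ω ^ r * t) = (-t) * ((-t⁻¹) - ω ^ r) := by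
      intro r; field_simp; ring
    rw [Finset.prod_congr rfl fun r _ => h1 r, Finset.prod_mul_distrib, Finset.prod_const,
      card_range, ← key]
    have h3 : (-t) ^ d * (-t⁻¹) ^ d = 1 := by
      rw [← mul_pow]; field_simp; exact one_pow d
    rw [mul_sub, h3, neg_pow, pow_succ]; ring

lemma gfun_ne (ω : ℂ) (j : ℕ) : gfun ω j ≠ 0 := by
  intro h
  have h2 := congrArg (Polynomial.eval 0) h
  simp [gfun] at h2

lemma gfun_mod {ω : ℂ} {d : ℕ} (hωd : ω ^ d = 1) (i : ℕ) : gfun ω i = gfun ω (i % d) := by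
  unfold gfun
  congr 2
  conv_lhs => rw [← Nat.div_add_mod i d]
  rw [show d * (i / d) + i % d + 1 = d * (i / d) + (i % d + 1) from by ring, pow_add, pow_mul,
    hωd, one_pow, one_mul]

lemma prod_gfun_d {ω : ℂ} {d : ℕ} (hω : IsPrimitiveRoot ω d) (hd : 0 < d) :
    ∏ s ∈ range d, gfun ω s = Ffun d := by
  apply Polynomial.funext
  intro t
  rw [eval_prod]
  have h1 : ∀ s ∈ range d, Polynomial.eval t (gfun ω s) = 1 + ω ^ s * (ω * t) := by
    intro s _
    simp [gfun]
    ring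
  rw [Finset.prod_congr rfl h1, my_root_prod hω hd (ω * t)]
  simp [Ffun, mul_pow, hω.pow_eq_one]

lemma my_prod_range_mul {M : Type*} [CommMonoid M] (f : ℕ → M) (a d : ℕ) :
    ∏ i ∈ range (a * d), f i = ∏ k ∈ range a, ∏ r ∈ range d, f (k * d + r) := by
  induction a with
  | zero => simp
  | succ n ih => rw [Nat.succ_mul, Finset.prod_range_add, ih, prod_range_succ]

lemma my_sum_range_mul {M : Type*} [AddCommMonoid M] (f : ℕ → M) (a d : ℕ) :
    ∑ i ∈ range (a * d), f i = ∑ k ∈ range a, ∑ r ∈ range d, f (k * d + r) := by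
  induction a with
  | zero => simp
  | succ n ih => rw [Nat.succ_mul, Finset.sum_range_add, ih, sum_range_succ]

lemma my_derivative_prod {R : Type*} [CommSemiring R] {ι : Type*} [DecidableEq ι]
    (s : Finset ι) (f : ι → R[X]) :
    derivative (∏ i ∈ s, f i) = ∑ i ∈ s, (∏ j ∈ s.erase i, f j) * derivative (f i) := by
  induction s using Finset.cons_induction with
  | empty => simp
  | cons a s ha ih =>
    rw [Finset.prod_cons, derivative_mul, ih, Finset.mul_sum, Finset.sum_cons, Finset.erase_cons]
    congr 1
    · exact mul_comm _ _
    · refine Finset.sum_congr rfl fun i hi => ?_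
      rw [Finset.erase_cons_of_ne _ (by rintro rfl; exact ha hi), Finset.prod_cons]
      ring

lemma prod_gfun_all {ω : ℂ} {d : ℕ} (hω : IsPrimitiveRoot ω d) (hd : 0 < d) (u : ℕ) :
    ∏ j ∈ range (u * d), gfun ω j = Ffun d ^ u := by
  rw [my_prod_range_mul]
  have h1 : ∀ k ∈ range u, ∏ r ∈ range d, gfun ω (k * d + r) = Ffun d := by
    intro k _
    have h2 : ∀ r ∈ range d, gfun ω (k * d + r) = gfun ω r := by
      intro r hr
      have h3 : (k * d + r) % d = r := by
        simp [Nat.add_mod, Nat.mul_mod_left, Nat.mod_eq_of_lt (mem_range.mp hr)]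
      rw [gfun_mod hω.pow_eq_one, h3]
    rw [Finset.prod_congr rfl h2, prod_gfun_d hω hd]
  rw [Finset.prod_congr rfl h1, Finset.prod_const, card_range]

lemma pip_mul_gfun {ω : ℂ} {d : ℕ} (hω : IsPrimitiveRoot ω d) (hd : 0 < d) {r : ℕ}
    (hr : r ∈ range d) : Pip ω d r * gfun ω r = Ffun d := by
  rw [Pip, Finset.prod_erase_mul _ _ hr, prod_gfun_d hω hd]

lemma prod_gfun_erase {ω : ℂ} {d : ℕ} (hω : IsPrimitiveRoot ω d) (hd : 0 < d) {u : ℕ}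
    (hu : 0 < u) {i : ℕ} (hi : i ∈ range (u * d)) :
    ∏ j ∈ (range (u * d)).erase i, gfun ω j = Ffun d ^ (u - 1) * Pip ω d (i % d) := by
  have h1 : (∏ j ∈ (range (u * d)).erase i, gfun ω j) * gfun ω i = Ffun d ^ u := by
    rw [Finset.prod_erase_mul _ _ hi, prod_gfun_all hω hd]
  have h2 : (Ffun d ^ (u - 1) * Pip ω d (i % d)) * gfun ω i = Ffun d ^ u := by
    rw [gfun_mod hω.pow_eq_one i, mul_assoc,
      pip_mul_gfun hω hd (mem_range.mpr (Nat.mod_lt _ hd)), ← pow_succ]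
    congr 1
    omega
  exact mul_right_cancel₀ (gfun_ne ω i) (h1.trans h2.symm)


lemma my_omega_sigma {ω : ℂ} {d : ℕ} (hω : IsPrimitiveRoot ω d) (hd : 0 < d) :
    ω ^ (∑ s ∈ range d, (s + 1)) = (-1) ^ (d + 1) := by
  have hgauss : 2 * (∑ s ∈ range d, (s + 1)) = d * (d + 1) := by
    have h := Finset.sum_range_id_mul_two (d + 1)
    have h2 : ∑ s ∈ range d, (s + 1) = ∑ s ∈ range (d + 1), s := by
      rw [Finset.sum_range_succ' (fun s => s) d]
      simp
    rw [h2, Nat.mul_comm, h]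
    simp [Nat.mul_comm]
  rcases Nat.even_or_odd d with he | ho
  · obtain ⟨m, hm⟩ := he
    have hm' : d = 2 * m := by omega
    have hσ : (∑ s ∈ range d, (s + 1)) = m * (d + 1) := by
      have h3 : 2 * (m * (d + 1)) = d * (d + 1) := by rw [hm']; ring
      omega
    have hm0 : 0 < m := by omega
    have hmd : m < d := by omega
    have hsq : ω ^ m * ω ^ m = 1 := by
      rw [← pow_add]
      have h4 : m + m = d := by omega
      rw [h4, hω.pow_eq_one]
    have hneg : ω ^ m = -1 := by
      rcases mul_self_eq_one_iff.mp hsq with h | h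
      · exact absurd h (hω.pow_ne_one_of_pos_of_lt hm0.ne' hmd)
      · exact h
    rw [hσ, pow_mul, hneg]
  · obtain ⟨m, hm⟩ : ∃ m, d + 1 = 2 * m := by
      obtain ⟨k, hk⟩ := ho; exact ⟨k + 1, by omega⟩
    have hσ : (∑ s ∈ range d, (s + 1)) = d * m := by
      have h3 : 2 * (d * m) = d * (d + 1) := by rw [hm]; ring
      omega
    rw [hσ, pow_mul, hω.pow_eq_one, one_pow]
    have hev : Even (d + 1) := ⟨m, by omega⟩
    rw [hev.neg_one_pow]


lemma my_prod_one_add (u : Finset ℕ) (c : ℕ → ℂ) :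
    ∏ s ∈ u, (1 + C (c s) * X) = ∑ A ∈ u.powerset, C (∏ s ∈ A, c s) * X ^ A.card := by
  have h := Finset.prod_add (fun s => C (c s) * X) (fun _ => (1 : ℂ[X])) u
  simp only [prod_const_one, mul_one] at h
  calc ∏ s ∈ u, (1 + C (c s) * X) = ∏ s ∈ u, (C (c s) * X + 1) :=
        Finset.prod_congr rfl fun s _ => add_comm _ _
    _ = ∑ A ∈ u.powerset, ∏ s ∈ A, C (c s) * X := h
    _ = ∑ A ∈ u.powerset, C (∏ s ∈ A, c s) * X ^ A.card := by
        refine Finset.sum_congr rfl fun A _ => ?_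
        rw [Finset.prod_mul_distrib, Finset.prod_const, map_prod]

lemma pip_natDegree_le {ω : ℂ} {d r : ℕ} (hr : r ∈ range d) :
    (Pip ω d r).natDegree ≤ d - 1 := by
  refine le_trans (Polynomial.natDegree_prod_le _ _) ?_
  have h1 : ∀ s ∈ (range d).erase r, (gfun ω s).natDegree ≤ 1 := by
    intro s _
    exact le_trans (natDegree_add_le _ _)
      (max_le (by simp) (le_trans (natDegree_C_mul_le _ _) natDegree_X_le))
  refine le_trans (Finset.sum_le_card_nsmul _ _ 1 h1) ?_
  rw [Finset.card_erase_of_mem hr, card_range, smul_eq_mul, mul_one]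

lemma dfun_coeff_zero {ω : ℂ} {u d v : ℕ} (hv : d - 1 < v) : (Dfun ω u d).coeff v = 0 := by
  rw [Dfun, Polynomial.finset_sum_coeff]
  refine Finset.sum_eq_zero fun r hr => ?_
  rw [coeff_C_mul,
    Polynomial.coeff_eq_zero_of_natDegree_lt (lt_of_le_of_lt (pip_natDegree_le hr) hv), mul_zero]

lemma pip_coeff_top {ω : ℂ} {d r : ℕ} (hr : r ∈ range d) :
    (Pip ω d r).coeff (d - 1) = ω ^ ((∑ s ∈ range d, (s + 1)) - (r + 1)) := by
  have hcard : ((range d).erase r).card = d - 1 := by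
    rw [Finset.card_erase_of_mem hr, card_range]
  rw [Pip, show (fun s => gfun ω s) = fun s => 1 + C (ω ^ (s + 1)) * X from rfl]
  rw [my_prod_one_add ((range d).erase r) (fun s => ω ^ (s + 1)), Polynomial.finset_sum_coeff]
  rw [Finset.sum_eq_single ((range d).erase r)]
  · rw [coeff_C_mul, coeff_X_pow, if_pos hcard.symm, mul_one, Finset.prod_pow_eq_pow_sum]
    congr 1
    have h : (∑ i ∈ (range d).erase r, (i + 1)) + (r + 1) = ∑ s ∈ range d, (s + 1) :=
      Finset.sum_erase_add (range d) (fun s => s + 1) hr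
    omega
  · intro A hA hne
    rw [coeff_C_mul, coeff_X_pow, if_neg, mul_zero]
    intro h
    exact hne (Finset.eq_of_subset_of_card_le (Finset.mem_powerset.mp hA) (by omega))
  · intro h
    exact absurd (Finset.mem_powerset_self _) h

lemma dfun_coeff_top {ω : ℂ} (u d : ℕ) :
    (Dfun ω u d).coeff (d - 1) =
      ((∑ r ∈ range d, tau u d r : ℕ) : ℂ) * ω ^ ((∑ s ∈ range d, (s + 1)) - 1) := by
  rw [Dfun, Polynomial.finset_sum_coeff, Nat.cast_sum, Finset.sum_mul]
  refine Finset.sum_congr rfl fun r hr => ?_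
  rw [coeff_C_mul, pip_coeff_top hr, mul_assoc, ← pow_add]
  congr 2
  have h1 : r + 1 ≤ ∑ s ∈ range d, (s + 1) :=
    Finset.single_le_sum (fun s _ => Nat.zero_le (s + 1)) hr
  omega

lemma ffun_pow {d u : ℕ} (hu : 0 < u) :
    Ffun d ^ (u - 1) =
      ∑ j ∈ range u, C ((((u - 1).choose j : ℕ) : ℂ) * (-1) ^ ((d + 1) * j)) * X ^ (d * j) := by
  rw [Ffun, add_comm (1 : ℂ[X]) _, add_pow, show u - 1 + 1 = u from by omega]
  refine Finset.sum_congr rfl fun j hj => ?_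
  rw [one_pow, mul_one, mul_pow, ← C_pow, ← pow_mul, ← pow_mul, ← C_eq_natCast,
    mul_right_comm, ← C_mul, mul_comm ((-1 : ℂ) ^ ((d + 1) * j))]


lemma coeff_main {ω : ℂ} {u b d : ℕ} (hb : 0 < b) (hd : 0 < d) (hbu : b ≤ u) :
    (Ffun d ^ (u - 1) * X * Dfun ω u d).coeff (b * d) =
      (((u - 1).choose (b - 1) : ℕ) : ℂ) * (-1) ^ ((d + 1) * (b - 1)) *
        (Dfun ω u d).coeff (d - 1) := by
  have hu : 0 < u := lt_of_lt_of_le hb hbu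
  have hcomm : d * b = b * d := Nat.mul_comm d b
  have hmul : d * (b - 1) + d = d * b := by rw [← Nat.mul_succ]; congr 1; omega
  rw [ffun_pow hu, Finset.sum_mul, Finset.sum_mul]
  have hterm : ∀ j : ℕ,
      (C ((((u - 1).choose j : ℕ) : ℂ) * (-1) ^ ((d + 1) * j)) * X ^ (d * j)) * X * Dfun ω u d
      = C ((((u - 1).choose j : ℕ) : ℂ) * (-1) ^ ((d + 1) * j)) * (Dfun ω u d * X ^ (d * j + 1)) := by
    intro j; rw [pow_succ]; ring
  rw [Finset.sum_congr rfl fun j _ => hterm j, Polynomial.finset_sum_coeff]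
  rw [Finset.sum_eq_single (b - 1)]
  · rw [coeff_C_mul, coeff_mul_X_pow', if_pos (by omega : d * (b - 1) + 1 ≤ b * d),
      show b * d - (d * (b - 1) + 1) = d - 1 from by omega]
  · intro j hj hne
    by_cases hle : d * j + 1 ≤ b * d
    · have hjb : j < b - 1 := by
        by_contra hcon
        push_neg at hcon
        have hbj : b ≤ j := by omega
        have h5 := Nat.mul_le_mul_left d hbj
        omega
      have h1 : d * (j + 1) ≤ d * (b - 1) := Nat.mul_le_mul_left d (by omega)
      have h2 : d * (j + 1) = d * j + d := Nat.mul_succ d j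
      rw [coeff_C_mul, coeff_mul_X_pow', if_pos hle, dfun_coeff_zero (by omega), mul_zero]
    · rw [coeff_C_mul, coeff_mul_X_pow', if_neg hle, mul_zero]
  · intro h
    exact absurd (mem_range.mpr (by omega : b - 1 < u)) h


lemma dfun_eq {ω : ℂ} {d : ℕ} (hω : IsPrimitiveRoot ω d) (hd : 0 < d) (u : ℕ) :
    ∑ i ∈ range (u * d), C (((i + 1 : ℕ) : ℂ) * ω ^ i) * Pip ω d (i % d) = Dfun ω u d := by
  rw [my_sum_range_mul, Dfun, Finset.sum_comm]
  refine Finset.sum_congr rfl fun r hr => ?_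
  have hrd : r < d := mem_range.mp hr
  have hmod : ∀ k : ℕ, (k * d + r) % d = r := by
    intro k; simp [Nat.add_mod, Nat.mul_mod_left, Nat.mod_eq_of_lt hrd]
  have hpow : ∀ k : ℕ, ω ^ (k * d + r) = ω ^ r := by
    intro k; rw [pow_add, pow_mul', hω.pow_eq_one, one_pow, one_mul]
  have hcast : ((tau u d r : ℕ) : ℂ) = ∑ k ∈ range u, ((k * d + r + 1 : ℕ) : ℂ) := by
    unfold tau; push_cast; rfl
  rw [hcast, Finset.sum_mul, map_sum, Finset.sum_mul]
  refine Finset.sum_congr rfl fun k _ => ?_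
  rw [hmod, hpow]

lemma eval_deriv_closed {ω : ℂ} {d : ℕ} (hω : IsPrimitiveRoot ω d) (hd : 0 < d) {u : ℕ}
    (hu : 0 < u) :
    Polynomial.eval (C ω : ℂ[X])
        (derivative (∏ j ∈ range (u * d), (1 + C (X : ℂ[X]) * X ^ (j + 1))))
      = Ffun d ^ (u - 1) * X * Dfun ω u d := by
  rw [my_derivative_prod, Polynomial.eval_finset_sum]
  have hterm : ∀ i ∈ range (u * d),
      Polynomial.eval (C ω : ℂ[X]) ((∏ j ∈ (range (u * d)).erase i,
          (1 + C (X : ℂ[X]) * X ^ (j + 1))) * derivative (1 + C (X : ℂ[X]) * X ^ (i + 1)))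
      = (Ffun d ^ (u - 1) * X) * (C (((i + 1 : ℕ) : ℂ) * ω ^ i) * Pip ω d (i % d)) := by
    intro i hi
    rw [eval_mul, Polynomial.eval_prod]
    have h1 : ∀ j ∈ (range (u * d)).erase i,
        Polynomial.eval (C ω : ℂ[X]) (1 + C (X : ℂ[X]) * X ^ (j + 1)) = gfun ω j := by
      intro j _
      simp only [gfun]
      rw [eval_add, eval_one, eval_mul, eval_C, eval_pow, eval_X, ← C_pow, mul_comm]
    rw [Finset.prod_congr rfl h1, prod_gfun_erase hω hd hu hi]
    have h2 : Polynomial.eval (C ω : ℂ[X]) (derivative (1 + C (X : ℂ[X]) * X ^ (i + 1)))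
        = C (((i + 1 : ℕ) : ℂ) * ω ^ i) * X := by
      rw [derivative_add, derivative_one, zero_add, derivative_C_mul_X_pow, eval_mul, eval_C,
        eval_pow, eval_X, Nat.add_sub_cancel, ← C_pow, ← C_eq_natCast, mul_assoc, ← C_mul,
        mul_comm]
    rw [h2]
    ring
  rw [Finset.sum_congr rfl hterm, ← Finset.mul_sum, dfun_eq hω hd u]


lemma my_prod_one_add' {R : Type*} [CommSemiring R] (u : Finset ℕ) (c : ℕ → R) (e : ℕ → ℕ) :
    ∏ s ∈ u, (1 + C (c s) * X ^ (e s))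
      = ∑ A ∈ u.powerset, C (∏ s ∈ A, c s) * X ^ (∑ s ∈ A, e s) := by
  have h := Finset.prod_add (fun s => C (c s) * X ^ (e s)) (fun _ => (1 : R[X])) u
  simp only [prod_const_one, mul_one] at h
  calc ∏ s ∈ u, (1 + C (c s) * X ^ (e s)) = ∏ s ∈ u, (C (c s) * X ^ (e s) + 1) :=
        Finset.prod_congr rfl fun s _ => add_comm _ _
    _ = ∑ A ∈ u.powerset, ∏ s ∈ A, C (c s) * X ^ (e s) := h
    _ = ∑ A ∈ u.powerset, C (∏ s ∈ A, c s) * X ^ (∑ s ∈ A, e s) := by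
        refine Finset.sum_congr rfl fun A _ => ?_
        rw [Finset.prod_mul_distrib, map_prod, Finset.prod_pow_eq_pow_sum]

lemma coeff_eval_deriv (ω : ℂ) (n m : ℕ) :
    (Polynomial.eval (C ω : ℂ[X])
        (derivative (∏ j ∈ range n, (1 + C (X : ℂ[X]) * X ^ (j + 1))))).coeff m
      = ∑ A ∈ powersetCard m (range n),
          ((∑ i ∈ A, (i + 1) : ℕ) : ℂ) * ω ^ ((∑ i ∈ A, (i + 1)) - 1) := by
  rw [my_prod_one_add' (range n) (fun _ => (X : ℂ[X])) (fun j => j + 1), derivative_sum,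
    Polynomial.eval_finset_sum, Polynomial.finset_sum_coeff,
    Finset.powersetCard_eq_filter, Finset.sum_filter]
  refine Finset.sum_congr rfl fun A _ => ?_
  rw [Finset.prod_const, derivative_C_mul_X_pow, eval_mul, eval_C, eval_pow, eval_X,
    ← C_pow, ← C_eq_natCast, mul_assoc, ← C_mul, mul_comm, coeff_C_mul, coeff_X_pow]
  split_ifs with h1 h2 h3
  · rw [mul_one]
  · exact absurd h1.symm h2
  · exact absurd h3.symm h1
  · rw [mul_zero]


lemma aeval_deriv_E (ω : ℂ) (n m : ℕ) :
    Polynomial.aeval ω (derivative (∑ A ∈ powersetCard m (range n),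
        ∏ i ∈ A, (X : Polynomial ℤ) ^ (i + 1)))
      = ∑ A ∈ powersetCard m (range n),
          ((∑ i ∈ A, (i + 1) : ℕ) : ℂ) * ω ^ ((∑ i ∈ A, (i + 1)) - 1) := by
  rw [derivative_sum, map_sum]
  refine Finset.sum_congr rfl fun A _ => ?_
  rw [Finset.prod_pow_eq_pow_sum, derivative_X_pow, map_mul, aeval_C, map_pow, aeval_X]
  push_cast
  ring

/-- The key derivative evaluation from the proof of Lemma 7.3: for positive integers
`a, b, d`, with `n = abd` and `m = bd`, let `E(q) = e_m(q, q², …, q^n)` be the `m`-th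
elementary symmetric polynomial evaluated at `(q, q², …, q^n)`. If `ω` is a primitive
`d`-th root of unity, then `2 a ω E'(ω) = (-1)^{b+m} n (n+1) C(ab, b)`. -/
theorem stmt3 (a b d : ℕ) (ha : 0 < a) (hb : 0 < b) (hd : 0 < d)
    (ω : ℂ) (hω : IsPrimitiveRoot ω d)
    (E : Polynomial ℤ)
    (hE : E = ∑ S ∈ Finset.powersetCard (b * d) (Finset.range (a * b * d)),
        ∏ i ∈ S, Polynomial.X ^ (i + 1)) :
    2 * (a : ℂ) * ω * Polynomial.aeval ω (Polynomial.derivative E) =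
      (-1 : ℂ) ^ (b + b * d) * ((a : ℂ) * b * d) * ((a : ℂ) * b * d + 1) *
        ((a * b).choose b : ℂ) := by
  have hab1 : 0 < a * b := Nat.mul_pos ha hb
  have hbu : b ≤ a * b := Nat.le_mul_of_pos_left b ha
  have h1 : Polynomial.aeval ω (Polynomial.derivative E)
      = (Ffun d ^ (a * b - 1) * X * Dfun ω (a * b) d).coeff (b * d) := by
    rw [hE, aeval_deriv_E, ← coeff_eval_deriv ω (a * b * d) (b * d),
      eval_deriv_closed hω hd hab1]
  have h2 : Polynomial.aeval ω (Polynomial.derivative E)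
      = (((a * b - 1).choose (b - 1) : ℕ) : ℂ) * (-1) ^ ((d + 1) * (b - 1)) *
          (((∑ r ∈ range d, tau (a * b) d r : ℕ) : ℂ) *
            ω ^ ((∑ s ∈ range d, (s + 1)) - 1)) := by
    rw [h1, coeff_main hb hd hbu, dfun_coeff_top]
  -- numeric facts
  have hτ : ∑ r ∈ range d, tau (a * b) d r = ∑ i ∈ range (a * b * d), (i + 1) := by
    rw [my_sum_range_mul (fun i => i + 1) (a * b) d]
    unfold tau
    rw [Finset.sum_comm]
  have hN : 2 * (∑ i ∈ range (a * b * d), (i + 1)) = (a * b * d) * (a * b * d + 1) := by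
    have h3 : ∑ i ∈ range (a * b * d), (i + 1) = ∑ i ∈ range (a * b * d + 1), i := by
      rw [Finset.sum_range_succ' (fun i => i) (a * b * d)]
      simp
    have h4 := Finset.sum_range_id_mul_two (a * b * d + 1)
    have h5 : (a * b * d + 1) * (a * b * d + 1 - 1) = (a * b * d) * (a * b * d + 1) :=
      by rw [Nat.add_sub_cancel]; ring
    omega
  have hσ1 : 1 ≤ ∑ s ∈ range d, (s + 1) :=
    Finset.single_le_sum (f := fun s => s + 1) (fun i _ => Nat.zero_le _) (mem_range.mpr hd)
  have hωσ : ω * ω ^ ((∑ s ∈ range d, (s + 1)) - 1) = (-1 : ℂ) ^ (d + 1) := by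
    rw [← pow_succ']
    rw [show (∑ s ∈ range d, (s + 1)) - 1 + 1 = ∑ s ∈ range d, (s + 1) from by omega]
    exact my_omega_sigma hω hd
  have hsign : (-1 : ℂ) ^ ((d + 1) * (b - 1)) * (-1 : ℂ) ^ (d + 1) = (-1 : ℂ) ^ (b + b * d) := by
    rw [← pow_add]
    congr 1
    have h6 : (d + 1) * (b - 1) + (d + 1) = (d + 1) * b := by rw [← Nat.mul_succ]; congr 1; omega
    rw [h6]; ring
  have hach : a * ((a * b - 1).choose (b - 1)) = (a * b).choose b := by
    have h := Nat.add_one_mul_choose_eq (a * b - 1) (b - 1)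
    have e1 : a * b - 1 + 1 = a * b := by omega
    have e2 : b - 1 + 1 = b := by omega
    rw [e1, e2] at h
    apply Nat.eq_of_mul_eq_mul_right hb
    calc a * ((a * b - 1).choose (b - 1)) * b = a * b * ((a * b - 1).choose (b - 1)) := by ring
      _ = (a * b).choose b * b := h
  have c2 : 2 * ((∑ i ∈ range (a * b * d), (i + 1) : ℕ) : ℂ)
      = ((a : ℂ) * b * d) * ((a : ℂ) * b * d + 1) := by exact_mod_cast congrArg (Nat.cast (R := ℂ)) hN
  have c3 : (a : ℂ) * (((a * b - 1).choose (b - 1) : ℕ) : ℂ) = (((a * b).choose b : ℕ) : ℂ) := by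
    exact_mod_cast congrArg (Nat.cast (R := ℂ)) hach
  rw [h2, hτ]
  calc 2 * (a : ℂ) * ω * ((((a * b - 1).choose (b - 1) : ℕ) : ℂ) * (-1) ^ ((d + 1) * (b - 1)) *
          (((∑ i ∈ range (a * b * d), (i + 1) : ℕ) : ℂ) *
            ω ^ ((∑ s ∈ range d, (s + 1)) - 1)))
      = (2 * (a : ℂ) * (((a * b - 1).choose (b - 1) : ℕ) : ℂ) *
          ((∑ i ∈ range (a * b * d), (i + 1) : ℕ) : ℂ)) *
          ((-1) ^ ((d + 1) * (b - 1)) * (ω * ω ^ ((∑ s ∈ range d, (s + 1)) - 1))) := by ring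
    _ = (2 * (a : ℂ) * (((a * b - 1).choose (b - 1) : ℕ) : ℂ) *
          ((∑ i ∈ range (a * b * d), (i + 1) : ℕ) : ℂ)) * (-1 : ℂ) ^ (b + b * d) := by
        rw [hωσ, hsign]
    _ = (-1 : ℂ) ^ (b + b * d) * ((a : ℂ) * b * d) * ((a : ℂ) * b * d + 1) *
        ((a * b).choose b : ℂ) := by
        linear_combination ((-1 : ℂ) ^ (b + b * d) * (a : ℂ) *
            (((a * b - 1).choose (b - 1) : ℕ) : ℂ)) * c2 +
          ((-1 : ℂ) ^ (b + b * d) * ((a : ℂ) * b * d) * ((a : ℂ) * b * d + 1)) * c3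
end

section
/- Let d1, d2 ≥ 1 be integers. In the field ℚ(q) of rational functions, define Ω(q) := (q − 2 + q^{−1}) · (∑_{k ∣ gcd(d1, d2)} μ(k) · k² · (q^{d1·d2/k} − 2 + q^{−d1·d2/k})) / ((q^{d1} − 2 + q^{−d1}) · (q^{d2} − 2 + q^{−d2})). Then q^{d1·d2 − d1 − d2 + 1} · Ω(q) is a polynomial in q with integer coefficients. -/
open scoped BigOperators

open Polynomial

/-- `q^n - 2 + q^{-n}` in the field `ℚ(q)` of rational functions (the square of the
balanced `q`-integer `q^{n/2} - q^{-n/2}`). -/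
noncomputable def sq2 (n : ℤ) : RatFunc ℚ := RatFunc.X ^ n - 2 + RatFunc.X ^ (-n)

private lemma binom3 (n : ℕ) :
    ∃ c a : Polynomial ℤ, (X : Polynomial ℤ) ^ n
        = 1 + (n : Polynomial ℤ) * (X - 1) + c * (X - 1) ^ 2 + (X - 1) ^ 3 * a
      ∧ c * 2 = (n : Polynomial ℤ) * ((n : Polynomial ℤ) - 1) := by
  induction n with
  | zero => exact ⟨0, 0, by push_cast; ring, by push_cast; ring⟩
  | succ n ih =>
    obtain ⟨c, a, h1, h2⟩ := ih
    refine ⟨c + (n : Polynomial ℤ), a + c + (X - 1) * a, ?_, ?_⟩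
    · push_cast
      linear_combination (X : Polynomial ℤ) * h1
    · push_cast
      linear_combination h2

private lemma term_dvd (n k m : ℕ) :
    ((X : Polynomial ℤ) - 1) ^ 4 ∣
      (k : Polynomial ℤ) ^ 2 * (X ^ m * (X ^ n - 1) ^ 2)
        - ((n : Polynomial ℤ) * (k : Polynomial ℤ)) ^ 2 * (X - 1) ^ 2
        - ((n : Polynomial ℤ) * (k : Polynomial ℤ)) ^ 2 * ((n : Polynomial ℤ) - 1 + (m : Polynomial ℤ)) * (X - 1) ^ 3 := by
  obtain ⟨c, a, h1, h2⟩ := binom3 n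
  obtain ⟨c', a', h1', -⟩ := binom3 m
  have hXm : (X : Polynomial ℤ) ^ m
      = 1 + (m : Polynomial ℤ) * (X - 1) + (X - 1) ^ 2 * (c' + (X - 1) * a') := by
    rw [h1']; ring
  have hsq : ((X : Polynomial ℤ) ^ n - 1) ^ 2
      = (n : Polynomial ℤ) ^ 2 * (X - 1) ^ 2
        + (n : Polynomial ℤ) ^ 2 * ((n : Polynomial ℤ) - 1) * (X - 1) ^ 3
        + (X - 1) ^ 4 * (c ^ 2 + 2 * (n : Polynomial ℤ) * a + 2 * c * a * (X - 1) + a ^ 2 * (X - 1) ^ 2) := by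
    rw [h1]
    linear_combination ((n : Polynomial ℤ) * (X - 1) ^ 3) * h2
  refine ⟨(k : Polynomial ℤ) ^ 2 *
      ((1 + (m : Polynomial ℤ) * (X - 1) + (c' + (X - 1) * a') * (X - 1) ^ 2)
          * (c ^ 2 + 2 * (n : Polynomial ℤ) * a + 2 * c * a * (X - 1) + a ^ 2 * (X - 1) ^ 2)
        + (n : Polynomial ℤ) ^ 2 * ((m : Polynomial ℤ) * ((n : Polynomial ℤ) - 1)
            + (c' + (X - 1) * a') + (c' + (X - 1) * a') * ((n : Polynomial ℤ) - 1) * (X - 1))), ?_⟩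
  rw [hXm, hsq]
  ring


private lemma moebius_sum_zero {g : ℕ} (hg : 2 ≤ g) :
    ∑ k ∈ g.divisors, (ArithmeticFunction.moebius k : ℤ) = 0 := by
  have h1 : ((ArithmeticFunction.moebius * ↑ArithmeticFunction.zeta :
      ArithmeticFunction ℤ)) g = ∑ k ∈ g.divisors, (ArithmeticFunction.moebius k : ℤ) :=
    ArithmeticFunction.coe_mul_zeta_apply
  rw [ArithmeticFunction.moebius_mul_coe_zeta] at h1
  rw [← h1, ArithmeticFunction.one_apply, if_neg (by omega)]

private lemma sum_dvd {g : ℕ} (hg : 2 ≤ g) :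
    ((X : Polynomial ℤ) - 1) ^ 4 ∣
      ∑ k ∈ g.divisors, C ((ArithmeticFunction.moebius k : ℤ) * (k : ℤ) ^ 2)
        * (X ^ (g - g / k) * (X ^ (g / k) - 1) ^ 2) := by
  have hg0 : g ≠ 0 := by omega
  have step : ∑ k ∈ g.divisors, C ((ArithmeticFunction.moebius k : ℤ) * (k : ℤ) ^ 2)
        * (X ^ (g - g / k) * (X ^ (g / k) - 1) ^ 2)
      = ∑ k ∈ g.divisors,
          (C ((ArithmeticFunction.moebius k : ℤ)) *
            ((k : Polynomial ℤ) ^ 2 * (X ^ (g - g / k) * (X ^ (g / k) - 1) ^ 2)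
              - (((g / k : ℕ) : Polynomial ℤ) * (k : Polynomial ℤ)) ^ 2 * (X - 1) ^ 2
              - (((g / k : ℕ) : Polynomial ℤ) * (k : Polynomial ℤ)) ^ 2
                  * (((g / k : ℕ) : Polynomial ℤ) - 1 + ((g - g / k : ℕ) : Polynomial ℤ)) * (X - 1) ^ 3)
          + C ((ArithmeticFunction.moebius k : ℤ)) *
              ((g : Polynomial ℤ) ^ 2 * (X - 1) ^ 2
                + (g : Polynomial ℤ) ^ 2 * ((g : Polynomial ℤ) - 1) * (X - 1) ^ 3)) := by
    refine Finset.sum_congr rfl fun k hk => ?_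
    obtain ⟨hkd, -⟩ := Nat.mem_divisors.mp hk
    have hk0 : k ≠ 0 := by rintro rfl; exact hg0 (Nat.eq_zero_of_zero_dvd hkd)
    have hnk : g / k * k = g := Nat.div_mul_cancel hkd
    have hnle : g / k ≤ g := Nat.div_le_self g k
    have hcast1 : ((g / k : ℕ) : Polynomial ℤ) * (k : Polynomial ℤ) = (g : Polynomial ℤ) := by
      exact_mod_cast congrArg (Nat.cast : ℕ → Polynomial ℤ) hnk
    have hcast2 : ((g / k : ℕ) : Polynomial ℤ) - 1 + ((g - g / k : ℕ) : Polynomial ℤ)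
        = (g : Polynomial ℤ) - 1 := by
      push_cast [Nat.cast_sub hnle]
      ring
    rw [← hcast2, ← hcast1]
    simp only [map_mul, map_pow, map_natCast]
    ring
  rw [step, Finset.sum_add_distrib]
  have hzero : (∑ k ∈ g.divisors, C ((ArithmeticFunction.moebius k : ℤ)) *
      ((g : Polynomial ℤ) ^ 2 * (X - 1) ^ 2
        + (g : Polynomial ℤ) ^ 2 * ((g : Polynomial ℤ) - 1) * (X - 1) ^ 3)) = 0 := by
    rw [← Finset.sum_mul, ← map_sum, moebius_sum_zero hg, map_zero, zero_mul]
  rw [hzero, add_zero]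
  exact Finset.dvd_sum fun k hk => (term_dvd (g / k) k (g - g / k)).mul_left _

private lemma pow_sub_one_dvd_pow_sub_one (a b : ℕ) (h : a ∣ b) :
    ((X : Polynomial ℤ) ^ a - 1) ∣ ((X : Polynomial ℤ) ^ b - 1) := by
  obtain ⟨t, rfl⟩ := h
  have := sub_dvd_pow_sub_pow ((X : Polynomial ℤ) ^ a) 1 t
  simpa [← pow_mul] using this

private lemma main_dvd (d1 d2 : ℕ) (h1 : 1 ≤ d1) (h2 : 1 ≤ d2) :
    (((X : Polynomial ℤ) ^ d1 - 1) * ((X : Polynomial ℤ) ^ d2 - 1)) ^ 2 ∣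
      (X - 1) ^ 2 * ∑ k ∈ (Nat.gcd d1 d2).divisors,
        C ((ArithmeticFunction.moebius k : ℤ) * (k : ℤ) ^ 2)
          * (X ^ (d1 * d2 - d1 * d2 / k) * (X ^ (d1 * d2 / k) - 1) ^ 2) := by
  set g := Nat.gcd d1 d2 with hgdef
  set L := Nat.lcm d1 d2 with hLdef
  have hg1 : 1 ≤ g := Nat.gcd_pos_of_pos_left d2 (by omega)
  have hL1 : 1 ≤ L := Nat.pos_of_ne_zero (Nat.lcm_ne_zero (by omega) (by omega))
  have hgL : g * L = d1 * d2 := Nat.gcd_mul_lcm d1 d2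
  -- B-side
  have hB : (((X : Polynomial ℤ) ^ d1 - 1) * ((X : Polynomial ℤ) ^ d2 - 1)) ∣
      ((X : Polynomial ℤ) ^ g - 1) * ((X : Polynomial ℤ) ^ L - 1) := by
    rw [← prod_cyclotomic_eq_X_pow_sub_one (by omega : 0 < d1) ℤ,
        ← prod_cyclotomic_eq_X_pow_sub_one (by omega : 0 < d2) ℤ,
        ← prod_cyclotomic_eq_X_pow_sub_one (by omega : 0 < g) ℤ,
        ← prod_cyclotomic_eq_X_pow_sub_one (by omega : 0 < L) ℤ,
        ← Finset.prod_union_inter]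
    have hint : d1.divisors ∩ d2.divisors = g.divisors := by
      ext m
      simp only [Finset.mem_inter, Nat.mem_divisors]
      constructor
      · rintro ⟨⟨ha, -⟩, ⟨hb, -⟩⟩
        exact ⟨Nat.dvd_gcd ha hb, by omega⟩
      · rintro ⟨hm, -⟩
        exact ⟨⟨hm.trans (Nat.gcd_dvd_left _ _), by omega⟩,
          ⟨hm.trans (Nat.gcd_dvd_right _ _), by omega⟩⟩
    have hsub : d1.divisors ∪ d2.divisors ⊆ L.divisors := by
      intro m hm
      rcases Finset.mem_union.mp hm with h | h <;>
        obtain ⟨hd, -⟩ := Nat.mem_divisors.mp h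
      · exact Nat.mem_divisors.mpr ⟨hd.trans (Nat.dvd_lcm_left _ _), by omega⟩
      · exact Nat.mem_divisors.mpr ⟨hd.trans (Nat.dvd_lcm_right _ _), by omega⟩
    rw [hint, mul_comm]
    exact mul_dvd_mul dvd_rfl (Finset.prod_dvd_prod_of_subset _ _ _ hsub)
  have hB2 : (((X : Polynomial ℤ) ^ d1 - 1) * ((X : Polynomial ℤ) ^ d2 - 1)) ^ 2 ∣
      (((X : Polynomial ℤ) ^ g - 1) * ((X : Polynomial ℤ) ^ L - 1)) ^ 2 :=
    pow_dvd_pow_of_dvd hB 2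
  -- rewrite the sum as an evaluation at X^L
  have hsum : (∑ k ∈ g.divisors, C ((ArithmeticFunction.moebius k : ℤ) * (k : ℤ) ^ 2)
        * (X ^ (d1 * d2 - d1 * d2 / k) * (X ^ (d1 * d2 / k) - 1) ^ 2))
      = aeval ((X : Polynomial ℤ) ^ L)
          (∑ k ∈ g.divisors, C ((ArithmeticFunction.moebius k : ℤ) * (k : ℤ) ^ 2)
            * (X ^ (g - g / k) * (X ^ (g / k) - 1) ^ 2)) := by
    rw [map_sum]
    refine Finset.sum_congr rfl fun k hk => ?_
    obtain ⟨hkd, -⟩ := Nat.mem_divisors.mp hk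
    have hk0 : k ≠ 0 := by rintro rfl; exact absurd (Nat.eq_zero_of_zero_dvd hkd) (by omega)
    have h1k : d1 * d2 / k = L * (g / k) := by
      rw [← hgL, mul_comm g L, Nat.mul_div_assoc L hkd]
    have h2k : d1 * d2 - d1 * d2 / k = L * (g - g / k) := by
      rw [h1k, ← hgL, mul_comm g L, Nat.mul_sub]
    rw [h2k, h1k, pow_mul, pow_mul]
    simp only [map_mul, map_pow, map_sub, map_one, aeval_X, aeval_C, algebraMap_int_eq,
      eq_intCast, Polynomial.C_eq_intCast, map_intCast, map_natCast]
  -- finish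
  by_cases hgone : g = 1
  · have hLN : L = d1 * d2 := by rw [hgone, one_mul] at hgL; exact hgL
    rw [hgone, hLN] at hB2
    have hsum1 : (∑ k ∈ g.divisors, C ((ArithmeticFunction.moebius k : ℤ) * (k : ℤ) ^ 2)
          * (X ^ (d1 * d2 - d1 * d2 / k) * (X ^ (d1 * d2 / k) - 1) ^ 2))
        = ((X : Polynomial ℤ) ^ (d1 * d2) - 1) ^ 2 := by
      rw [hgone, Nat.divisors_one, Finset.sum_singleton, Nat.div_one, Nat.sub_self]
      simp [ArithmeticFunction.moebius_apply_one]
    rw [hsum1]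
    have heq : (((X : Polynomial ℤ) ^ 1 - 1) * ((X : Polynomial ℤ) ^ (d1 * d2) - 1)) ^ 2
        = (X - 1) ^ 2 * ((X : Polynomial ℤ) ^ (d1 * d2) - 1) ^ 2 := by ring
    rwa [heq] at hB2
  · have hg2 : 2 ≤ g := by omega
    obtain ⟨c, hc⟩ := sum_dvd hg2
    rw [hsum]
    have hGL : ((X : Polynomial ℤ) ^ g - 1) ∣ ((X : Polynomial ℤ) ^ L - 1) :=
      pow_sub_one_dvd_pow_sub_one g L ((Nat.gcd_dvd_left d1 d2).trans (Nat.dvd_lcm_left d1 d2))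
    calc (((X : Polynomial ℤ) ^ d1 - 1) * ((X : Polynomial ℤ) ^ d2 - 1)) ^ 2
        ∣ (((X : Polynomial ℤ) ^ g - 1) * ((X : Polynomial ℤ) ^ L - 1)) ^ 2 := hB2
      _ ∣ ((X : Polynomial ℤ) ^ L - 1) ^ 4 := by
          have h4 : (((X : Polynomial ℤ) ^ L - 1) * ((X : Polynomial ℤ) ^ L - 1)) ^ 2
              = ((X : Polynomial ℤ) ^ L - 1) ^ 4 := by ring
          rw [← h4]
          exact pow_dvd_pow_of_dvd (mul_dvd_mul hGL dvd_rfl) 2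
      _ ∣ aeval ((X : Polynomial ℤ) ^ L)
            (∑ k ∈ g.divisors, C ((ArithmeticFunction.moebius k : ℤ) * (k : ℤ) ^ 2)
              * (X ^ (g - g / k) * (X ^ (g / k) - 1) ^ 2)) := by
          rw [hc, map_mul, map_pow, map_sub, map_one, aeval_X]
          exact Dvd.intro _ rfl
      _ ∣ (X - 1) ^ 2 * aeval ((X : Polynomial ℤ) ^ L)
            (∑ k ∈ g.divisors, C ((ArithmeticFunction.moebius k : ℤ) * (k : ℤ) ^ 2)
              * (X ^ (g - g / k) * (X ^ (g / k) - 1) ^ 2)) := dvd_mul_left _ _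

private lemma ratX_pow_sub_one_ne (n : ℕ) (hn : 1 ≤ n) :
    (RatFunc.X : RatFunc ℚ) ^ n - 1 ≠ 0 := by
  intro h
  have h0 : ((X : Polynomial ℚ) ^ n - 1) = 0 := by
    apply RatFunc.algebraMap_injective ℚ
    rw [map_sub, map_pow, RatFunc.algebraMap_X, map_one, map_zero]
    exact h
  have := congrArg (Polynomial.eval 0) h0
  simp [zero_pow (by omega : n ≠ 0)] at this

private lemma sq2_nat (n : ℕ) :
    sq2 (n : ℤ) = ((RatFunc.X : RatFunc ℚ) ^ n - 1) ^ 2 / RatFunc.X ^ n := by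
  have hne : (RatFunc.X : RatFunc ℚ) ^ n ≠ 0 := pow_ne_zero _ RatFunc.X_ne_zero
  rw [sq2, zpow_neg, zpow_natCast, eq_div_iff hne]
  linear_combination inv_mul_cancel₀ hne

/-- Open BPS integrality (Theorem 7.1, case `l = 4`) for `F₀(0,0,0,0)`: for `d1, d2 ≥ 1`,
with `Ω(q) = (q - 2 + q⁻¹) ∑_{k ∣ gcd(d1,d2)} μ(k) k² (q^{d1d2/k} - 2 + q^{-d1d2/k})
/ ((q^{d1} - 2 + q^{-d1})(q^{d2} - 2 + q^{-d2}))`, the rational function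
`q^{d1d2 - d1 - d2 + 1} Ω(q)` is a polynomial in `q` with integer coefficients. -/
theorem stmt6 (d1 d2 : ℕ) (h1 : 1 ≤ d1) (h2 : 1 ≤ d2) :
    ∃ P : Polynomial ℤ,
      RatFunc.X ^ ((d1 : ℤ) * d2 - d1 - d2 + 1) *
        (sq2 1 *
          (∑ k ∈ (Nat.gcd d1 d2).divisors,
            ((ArithmeticFunction.moebius k : ℤ) : RatFunc ℚ) * (k : RatFunc ℚ) ^ 2 *
              sq2 ((d1 * d2 / k : ℕ) : ℤ)) /
          (sq2 (d1 : ℤ) * sq2 (d2 : ℤ)))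
      = Polynomial.aeval RatFunc.X P := by
  obtain ⟨P, hP⟩ := main_dvd d1 d2 h1 h2
  refine ⟨P, ?_⟩
  have huz : (RatFunc.X : RatFunc ℚ) ≠ 0 := RatFunc.X_ne_zero
  have hd1 : (RatFunc.X : RatFunc ℚ) ^ d1 - 1 ≠ 0 := ratX_pow_sub_one_ne d1 h1
  have hd2 : (RatFunc.X : RatFunc ℚ) ^ d2 - 1 ≠ 0 := ratX_pow_sub_one_ne d2 h2
  -- value form of hP
  have hval := congrArg (aeval (RatFunc.X : RatFunc ℚ)) hP
  simp only [map_mul, map_pow, map_sub, map_add, map_one, map_sum, aeval_X, aeval_C,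
    algebraMap_int_eq, eq_intCast, Int.cast_mul, Int.cast_pow, Int.cast_natCast,
    map_intCast, map_natCast] at hval
  -- exponent
  have hE : ((d1 : ℤ) * d2 - d1 - d2 + 1) = (((d1 - 1) * (d2 - 1) : ℕ) : ℤ) := by
    push_cast [Nat.cast_sub h1, Nat.cast_sub h2]
    ring
  rw [hE, zpow_natCast]
  have hsq21 : sq2 1 = ((RatFunc.X : RatFunc ℚ) - 1) ^ 2 / RatFunc.X := by
    have := sq2_nat 1
    simpa using this
  rw [hsq21, sq2_nat d1, sq2_nat d2]
  have hsumF : (∑ k ∈ (Nat.gcd d1 d2).divisors,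
        ((ArithmeticFunction.moebius k : ℤ) : RatFunc ℚ) * (k : RatFunc ℚ) ^ 2 *
          sq2 ((d1 * d2 / k : ℕ) : ℤ))
      = (∑ k ∈ (Nat.gcd d1 d2).divisors,
          ((ArithmeticFunction.moebius k : ℤ) : RatFunc ℚ) * (k : RatFunc ℚ) ^ 2 *
            (RatFunc.X ^ (d1 * d2 - d1 * d2 / k) * (RatFunc.X ^ (d1 * d2 / k) - 1) ^ 2))
        / RatFunc.X ^ (d1 * d2) := by
    rw [Finset.sum_div]
    refine Finset.sum_congr rfl fun k hk => ?_
    have hle : d1 * d2 / k ≤ d1 * d2 := Nat.div_le_self _ _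
    rw [sq2_nat, ← mul_div_assoc,
      div_eq_div_iff (pow_ne_zero _ huz) (pow_ne_zero _ huz)]
    have hXX : (RatFunc.X : RatFunc ℚ) ^ (d1 * d2 - d1 * d2 / k) * RatFunc.X ^ (d1 * d2 / k)
        = RatFunc.X ^ (d1 * d2) := by
      rw [← pow_add, Nat.sub_add_cancel hle]
    linear_combination (-(((ArithmeticFunction.moebius k : ℤ) : RatFunc ℚ) * (k : RatFunc ℚ) ^ 2
      * (RatFunc.X ^ (d1 * d2 / k) - 1) ^ 2)) * hXX
  rw [hsumF]
  -- final algebra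
  have hpow : (RatFunc.X : RatFunc ℚ) ^ ((d1 - 1) * (d2 - 1)) * (RatFunc.X ^ d1 * RatFunc.X ^ d2)
      = RatFunc.X * RatFunc.X ^ (d1 * d2) := by
    obtain ⟨a, rfl⟩ := Nat.exists_eq_add_of_le h1
    obtain ⟨b, rfl⟩ := Nat.exists_eq_add_of_le h2
    rw [mul_comm (RatFunc.X ^ (1+a)) (RatFunc.X ^ (1+b)), ← pow_add, ← pow_add, ← pow_succ']
    congr 1
    simp only [Nat.add_sub_cancel_left]
    ring
  rw [div_mul_div_comm, div_mul_div_comm, div_div_eq_mul_div, div_mul_eq_mul_div, div_div,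
    ← mul_div_assoc, div_eq_iff (by
      exact mul_ne_zero (mul_ne_zero RatFunc.X_ne_zero (pow_ne_zero _ RatFunc.X_ne_zero))
        (mul_ne_zero (pow_ne_zero _ hd1) (pow_ne_zero _ hd2)))]
  linear_combination (RatFunc.X ^ ((d1 - 1) * (d2 - 1)) * (RatFunc.X ^ d1 * RatFunc.X ^ d2)) * hval
    + ((aeval (RatFunc.X : RatFunc ℚ)) P * ((RatFunc.X ^ d1 - 1) * (RatFunc.X ^ d2 - 1)) ^ 2) * hpow
end

section
/- For all integers d1, d2 ≥ 1, the square (d1 + d2)² divides ∑_{k ∣ gcd(d1, d2)} μ(k) · C((d1 + d2)/k, d1/k)². -/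
open scoped BigOperators

namespace KP

open Finset Nat

def Jset (p R : ℕ) : Finset ℕ := (Finset.Ioc 0 R).filter (fun j => ¬ p ∣ j)

lemma prod_Ioc_id_eq_factorial (n : ℕ) : (∏ x ∈ Finset.Ioc 0 n, x) = n ! := by
  rw [← Finset.prod_Ico_id_eq_factorial n]
  congr 1

lemma fact_split {p : ℕ} (hp : p.Prime) (k : ℕ) :
    (p * k)! = p ^ k * k ! * ∏ j ∈ Jset p (p * k), j := by
  have hp0 : 0 < p := hp.pos
  have h1 : (p * k)! = ∏ x ∈ Finset.Ioc 0 (p * k), x := (prod_Ioc_id_eq_factorial _).symm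
  rw [h1, ← Finset.prod_filter_mul_prod_filter_not (Finset.Ioc 0 (p * k)) (fun j => p ∣ j)]
  have h2 : (Finset.Ioc 0 (p * k)).filter (fun j => p ∣ j)
      = (Finset.Ioc 0 k).image (fun i => p * i) := by
    ext j
    simp only [Finset.mem_filter, Finset.mem_Ioc, Finset.mem_image]
    constructor
    · rintro ⟨⟨hj0, hjk⟩, i, rfl⟩
      exact ⟨i, ⟨(by rintro rfl; simp at hj0 : i ≠ 0).bot_lt, Nat.le_of_mul_le_mul_left hjk hp0⟩, rfl⟩
    · rintro ⟨i, ⟨hi0, hik⟩, rfl⟩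
      exact ⟨⟨by positivity, Nat.mul_le_mul_left p hik⟩, ⟨i, rfl⟩⟩
  rw [h2, Finset.prod_image (by intro a _ b _ h; exact Nat.eq_of_mul_eq_mul_left hp0 h)]
  rw [Finset.prod_mul_distrib, Finset.prod_const, Nat.card_Ioc, Nat.sub_zero,
    prod_Ioc_id_eq_factorial]
  rfl

lemma Jset_split {p : ℕ} (hp : p.Prime) (r w : ℕ) :
    (∏ j ∈ Jset p (p * (r + w)), j)
      = (∏ j ∈ Jset p (p * w), j) * ∏ j ∈ Jset p (p * r), (p * w + j) := by
  have hss : Finset.Ioc 0 (p * (r + w)) = Finset.Ioc 0 (p * w) ∪ Finset.Ioc (p * w) (p * (r + w)) := by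
    rw [Finset.Ioc_union_Ioc_eq_Ioc (Nat.zero_le _) (Nat.mul_le_mul_left p (by omega))]
  have hmul : p * (r + w) = p * r + p * w := Nat.mul_add p r w
  have himg : (Finset.Ioc (p * w) (p * (r + w))).filter (fun j => ¬ p ∣ j)
      = (Jset p (p * r)).image (fun j => p * w + j) := by
    ext j
    simp only [Jset, Finset.mem_filter, Finset.mem_Ioc, Finset.mem_image]
    constructor
    · rintro ⟨⟨hj1, hj2⟩, hj3⟩
      refine ⟨j - p * w, ⟨⟨by omega, by omega⟩, ?_⟩, by omega⟩
      intro hd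
      have hj : j = (j - p * w) + p * w := by omega
      exact hj3 (hj ▸ Nat.dvd_add hd (dvd_mul_right p w))
    · rintro ⟨i, ⟨⟨hi1, hi2⟩, hi3⟩, rfl⟩
      refine ⟨⟨by omega, by omega⟩, fun hd => hi3 ?_⟩
      exact (Nat.dvd_add_right (dvd_mul_right p w)).mp hd
  have hdisj : Disjoint ((Finset.Ioc 0 (p * w)).filter (fun j => ¬ p ∣ j))
      ((Finset.Ioc (p * w) (p * (r + w))).filter (fun j => ¬ p ∣ j)) := by
    apply Finset.disjoint_filter_filter
    apply Finset.disjoint_left.mpr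
    intro a ha hb
    simp only [Finset.mem_Ioc] at ha hb
    omega
  have : Jset p (p * (r + w)) = ((Finset.Ioc 0 (p * w)).filter (fun j => ¬ p ∣ j))
      ∪ ((Finset.Ioc (p * w) (p * (r + w))).filter (fun j => ¬ p ∣ j)) := by
    rw [Jset, hss, Finset.filter_union]
  rw [this, Finset.prod_union hdisj, himg,
    Finset.prod_image (by intro a _ b _ h; simp only at h; omega)]
  rfl

lemma Jset_prod_pos (p R : ℕ) : 0 < ∏ j ∈ Jset p R, j := by
  apply Finset.prod_pos
  intro j hj
  simp only [Jset, Finset.mem_filter, Finset.mem_Ioc] at hj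
  exact hj.1.1

lemma key_id {p : ℕ} (hp : p.Prime) (r w : ℕ) :
    (p * (r + w)).choose (p * r) * ∏ j ∈ Jset p (p * r), j
      = (r + w).choose r * ∏ j ∈ Jset p (p * r), (p * w + j) := by
  have h₁ : (p * (r + w)).choose (p * r) * (p * r)! * (p * w)! = (p * (r + w))! := by
    have := Nat.choose_mul_factorial_mul_factorial
      (show p * r ≤ p * (r + w) from Nat.mul_le_mul_left p (by omega))
    rwa [show p * (r + w) - p * r = p * w by rw [Nat.mul_add]; omega] at this
  have h₂ : (r + w).choose r * r ! * w ! = (r + w)! := by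
    have := Nat.choose_mul_factorial_mul_factorial (show r ≤ r + w by omega)
    rwa [show r + w - r = w by omega] at this
  have big : (p * (r + w)).choose (p * r) * (p ^ r * r ! * ∏ j ∈ Jset p (p * r), j)
        * (p ^ w * w ! * ∏ j ∈ Jset p (p * w), j)
      = p ^ (r + w) * ((r + w).choose r * r ! * w !)
        * ((∏ j ∈ Jset p (p * w), j) * ∏ j ∈ Jset p (p * r), (p * w + j)) := by
    rw [← fact_split hp r, ← fact_split hp w, h₂, ← Jset_split hp r w,
      ← fact_split hp (r + w)]
    exact h₁
  have hK : (0:ℕ) < p ^ (r + w) * r ! * w ! * ∏ j ∈ Jset p (p * w), j := by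
    have h0 := Jset_prod_pos p (p * w)
    have hp0 : 0 < p := hp.pos
    positivity
  apply Nat.eq_of_mul_eq_mul_left hK
  calc (p ^ (r + w) * r ! * w ! * ∏ j ∈ Jset p (p * w), j)
        * ((p * (r + w)).choose (p * r) * ∏ j ∈ Jset p (p * r), j)
      = (p * (r + w)).choose (p * r) * (p ^ r * r ! * ∏ j ∈ Jset p (p * r), j)
        * (p ^ w * w ! * ∏ j ∈ Jset p (p * w), j) := by ring
    _ = p ^ (r + w) * ((r + w).choose r * r ! * w !)
        * ((∏ j ∈ Jset p (p * w), j) * ∏ j ∈ Jset p (p * r), (p * w + j)) := big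
    _ = (p ^ (r + w) * r ! * w ! * ∏ j ∈ Jset p (p * w), j)
        * ((r + w).choose r * ∏ j ∈ Jset p (p * r), (p * w + j)) := by ring

lemma mem_Jset {p R j : ℕ} : j ∈ Jset p R ↔ (0 < j ∧ j ≤ R) ∧ ¬ p ∣ j := by
  simp [Jset, Finset.mem_filter, Finset.mem_Ioc]

lemma E_dvd {p : ℕ} (hp : p.Prime) (r : ℕ)
    (hfp : ∀ j ∈ Jset p (p * r), 2 * j ≠ p * r) :
    ((p * r : ℕ) : ℤ) ∣ ∑ j ∈ Jset p (p * r), ∏ i ∈ (Jset p (p * r)).erase j, (i : ℤ) := by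
  set n := p * r with hn
  have hpn : p ∣ n := dvd_mul_right p r
  rw [← ZMod.intCast_zmod_eq_zero_iff_dvd]
  push_cast
  apply Finset.sum_involution (fun a _ => n - a)
  · intro a ha
    have haJ := mem_Jset.mp ha
    have halt : a < n := lt_of_le_of_ne haJ.1.2 (fun h => haJ.2 (h.symm ▸ hpn))
    have hmem : n - a ∈ Jset p n := by
      rw [mem_Jset]
      refine ⟨⟨by omega, by omega⟩, fun hd => haJ.2 ?_⟩
      have : a = n - (n - a) := by omega
      rw [this]
      exact Nat.dvd_sub hpn hd
    have hne : n - a ≠ a := by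
      have := hfp a ha
      omega
    have h1 : n - a ∈ (Jset p n).erase a := Finset.mem_erase.mpr ⟨hne, hmem⟩
    have h2 : a ∈ (Jset p n).erase (n - a) := Finset.mem_erase.mpr ⟨fun h => hne h.symm, ha⟩
    rw [← Finset.mul_prod_erase _ _ h1, ← Finset.mul_prod_erase _ _ h2,
      Finset.erase_right_comm]
    have hcast : ((n - a : ℕ) : ZMod n) + ((a : ℕ) : ZMod n) = 0 := by
      rw [← Nat.cast_add, show n - a + a = n by omega, ZMod.natCast_self]
    rw [← add_mul, hcast, zero_mul]
  · intro a ha _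
    have := hfp a ha
    have haJ := mem_Jset.mp ha
    omega
  · intro a ha
    have haJ := mem_Jset.mp ha
    have halt : a < n := lt_of_le_of_ne haJ.1.2 (fun h => haJ.2 (h.symm ▸ hpn))
    rw [mem_Jset]
    refine ⟨⟨by omega, by omega⟩, fun hd => haJ.2 ?_⟩
    have : a = n - (n - a) := by omega
    rw [this]
    exact Nat.dvd_sub hpn hd
  · intro a ha
    have haJ := mem_Jset.mp ha
    omega

lemma prod_add_sub_dvd (D : ℤ) (s : Finset ℕ) (f g : ℕ → ℤ) (hf : ∀ j ∈ s, D ∣ f j) :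
    D ∣ (∏ j ∈ s, (f j + g j)) - ∏ j ∈ s, g j := by
  classical
  induction s using Finset.induction_on with
  | empty => simp
  | insert a s ha ih =>
    rw [Finset.prod_insert ha, Finset.prod_insert ha]
    have hfa : D ∣ f a := hf a (Finset.mem_insert_self a s)
    have hAB : D ∣ (∏ j ∈ s, (f j + g j)) - ∏ j ∈ s, g j :=
      ih (fun j hj => hf j (Finset.mem_insert_of_mem hj))
    have key : (f a + g a) * (∏ j ∈ s, (f j + g j)) - g a * ∏ j ∈ s, g j
        = f a * (∏ j ∈ s, (f j + g j))
          + g a * ((∏ j ∈ s, (f j + g j)) - ∏ j ∈ s, g j) := by ring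
    rw [key]
    exact dvd_add (hfa.mul_right _) (hAB.mul_left _)

lemma prod_add_sub_sub_dvd (D : ℤ) (s : Finset ℕ) (f g : ℕ → ℤ) (hf : ∀ j ∈ s, D ∣ f j) :
    D ^ 2 ∣ (∏ j ∈ s, (f j + g j)) - (∏ j ∈ s, g j)
      - ∑ j ∈ s, f j * ∏ i ∈ s.erase j, g i := by
  classical
  induction s using Finset.induction_on with
  | empty => simp
  | insert a s ha ih =>
    have hfa : D ∣ f a := hf a (Finset.mem_insert_self a s)
    have hf' : ∀ j ∈ s, D ∣ f j := fun j hj => hf j (Finset.mem_insert_of_mem hj)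
    have hsum : ∑ j ∈ s, f j * ∏ i ∈ (insert a s).erase j, g i
        = g a * ∑ j ∈ s, f j * ∏ i ∈ s.erase j, g i := by
      rw [Finset.mul_sum]
      refine Finset.sum_congr rfl (fun j hj => ?_)
      rw [Finset.erase_insert_of_ne (ne_of_mem_of_not_mem hj ha).symm,
        Finset.prod_insert (fun h => ha (Finset.mem_of_mem_erase h))]
      ring
    rw [Finset.prod_insert ha, Finset.prod_insert ha, Finset.sum_insert ha,
      Finset.erase_insert ha, hsum]
    have hAB : D ∣ (∏ j ∈ s, (f j + g j)) - ∏ j ∈ s, g j := prod_add_sub_dvd D s f g hf'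
    have key : (f a + g a) * (∏ j ∈ s, (f j + g j)) - g a * ∏ j ∈ s, g j
        - (f a * ∏ i ∈ s, g i + g a * ∑ j ∈ s, f j * ∏ i ∈ s.erase j, g i)
        = f a * ((∏ j ∈ s, (f j + g j)) - ∏ j ∈ s, g j)
          + g a * ((∏ j ∈ s, (f j + g j)) - (∏ j ∈ s, g j)
              - ∑ j ∈ s, f j * ∏ i ∈ s.erase j, g i) := by ring
    rw [key]
    exact dvd_add ((sq D).symm ▸ mul_dvd_mul hfa hAB) ((ih hf').mul_left _)

lemma choose_mul_id {N A : ℕ} (hA : 1 ≤ A) (hN : 1 ≤ N) :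
    N * (N - 1).choose (A - 1) = N.choose A * A := by
  have h := Nat.add_one_mul_choose_eq (N - 1) (A - 1)
  rwa [show N - 1 + 1 = N by omega, show A - 1 + 1 = A by omega] at h

lemma pow_dvd_choose_of_not_dvd {p : ℕ} (hp : p.Prime) {N A e : ℕ} (hA : 1 ≤ A)
    (hN : p ^ e ∣ N) (hnd : ¬ p ∣ A) : p ^ e ∣ N.choose A := by
  rcases Nat.eq_zero_or_pos N with h | h
  · subst h; rw [Nat.choose_eq_zero_of_lt hA]; exact dvd_zero _
  have hid := choose_mul_id hA h
  have hdvd : p ^ e ∣ N.choose A * A := hid ▸ hN.mul_right _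
  exact (Nat.Coprime.pow_left e ((Nat.Prime.coprime_iff_not_dvd hp).mpr hnd)).symm.symm.dvd_of_dvd_mul_right hdvd

lemma aux_pow_dvd_choose {p : ℕ} (hp : p.Prime) (r w : ℕ) (hr : 1 ≤ r) :
    p ^ ((r + w).factorization p - r.factorization p) ∣ (r + w).choose r := by
  set c := (r + w).factorization p with hc
  set ρ := r.factorization p with hρ
  rcases Nat.lt_or_ge c ρ with h | h
  · rw [Nat.sub_eq_zero_of_le (le_of_lt h), pow_zero]
    exact one_dvd _
  · have hm : 1 ≤ r + w := by omega
    have hid := choose_mul_id hr hm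
    have hcd : p ^ c ∣ r + w := Nat.ordProj_dvd _ _
    have h1 : p ^ c ∣ (r + w).choose r * r := by
      rw [← hid]; exact hcd.mul_right _
    have hr0 : r ≠ 0 := by omega
    have hord : p ^ ρ * (r / p ^ ρ) = r := Nat.ordProj_mul_ordCompl_eq_self r p
    have hnd : ¬ p ∣ r / p ^ ρ := Nat.not_dvd_ordCompl hp hr0
    have h2 : p ^ ρ * p ^ (c - ρ) ∣ p ^ ρ * ((r + w).choose r * (r / p ^ ρ)) := by
      rw [← pow_add, show ρ + (c - ρ) = c by omega]
      calc p ^ c ∣ (r + w).choose r * r := h1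
        _ = p ^ ρ * ((r + w).choose r * (r / p ^ ρ)) := by
            have hre : p ^ ρ * ((r + w).choose r * (r / p ^ ρ))
                = (r + w).choose r * (p ^ ρ * (r / p ^ ρ)) := by ring
            rw [hre, hord]
    have h3 : p ^ (c - ρ) ∣ (r + w).choose r * (r / p ^ ρ) :=
      (mul_dvd_mul_iff_left (pow_ne_zero ρ hp.ne_zero)).mp h2
    exact (Nat.Coprime.pow_left (c - ρ)
      ((Nat.Prime.coprime_iff_not_dvd hp).mpr hnd)).dvd_of_dvd_mul_right h3

lemma pow_dvd_choose_min {p : ℕ} (hp : p.Prime) (r w : ℕ) (hr : 1 ≤ r) (hw : 1 ≤ w) :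
    p ^ ((r + w).factorization p - min (r.factorization p) (w.factorization p))
      ∣ (r + w).choose r := by
  rcases le_total (r.factorization p) (w.factorization p) with h | h
  · rw [min_eq_left h]
    exact aux_pow_dvd_choose hp r w hr
  · rw [min_eq_right h]
    rw [Nat.choose_symm_add, Nat.add_comm r w]
    exact aux_pow_dvd_choose hp w r hw

lemma not_dvd_P1 {p : ℕ} (hp : p.Prime) (R : ℕ) : ¬ p ∣ ∏ j ∈ Jset p R, j := by
  rw [← Nat.Prime.coprime_iff_not_dvd hp]
  exact Nat.Coprime.prod_right (fun j hj =>
    (Nat.Prime.coprime_iff_not_dvd hp).mpr (mem_Jset.mp hj).2)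

lemma not_dvd_P2 {p : ℕ} (hp : p.Prime) (r w : ℕ) :
    ¬ p ∣ ∏ j ∈ Jset p (p * r), (p * w + j) := by
  rw [← Nat.Prime.coprime_iff_not_dvd hp]
  refine Nat.Coprime.prod_right (fun j hj => ?_)
  rw [Nat.Prime.coprime_iff_not_dvd hp]
  intro hd
  exact (mem_Jset.mp hj).2 ((Nat.dvd_add_right (dvd_mul_right p w)).mp hd)

lemma P2_sub_P1 {p : ℕ} (hp : p.Prime) (r w : ℕ) (hr : 1 ≤ r) (hw : 1 ≤ w) :
    ((p : ℤ)) ^ (2 * min (r.factorization p) (w.factorization p) + 2) ∣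
      ((∏ j ∈ Jset p (p * r), (p * w + j) : ℕ) : ℤ) ^ 2
        - ((∏ j ∈ Jset p (p * r), j : ℕ) : ℤ) ^ 2 := by
  set ρ := r.factorization p with hρ
  set ω := w.factorization p with hω
  set β := min ρ ω with hβ
  set P1 : ℕ := ∏ j ∈ Jset p (p * r), j with hP1
  set P2 : ℕ := ∏ j ∈ Jset p (p * r), (p * w + j) with hP2
  have hfactor : ((P2 : ℤ)) ^ 2 - (P1 : ℤ) ^ 2 = ((P2 : ℤ) - P1) * ((P2 : ℤ) + P1) := by ring
  by_cases hcase : p = 2 ∧ β = 0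
  · obtain ⟨hp2, hβ0⟩ := hcase
    subst hp2
    rw [hβ0, hfactor]
    have hodd1 : Odd (P1 : ℤ) := by
      rw [Int.odd_coe_nat, ← Nat.not_even_iff_odd]
      exact fun h => not_dvd_P1 hp _ h.two_dvd
    have hodd2 : Odd (P2 : ℤ) := by
      rw [Int.odd_coe_nat, ← Nat.not_even_iff_odd]
      exact fun h => not_dvd_P2 hp r w h.two_dvd
    have h1 : (2 : ℤ) ∣ (P2 : ℤ) - P1 := by
      rcases hodd1 with ⟨a, ha⟩; rcases hodd2 with ⟨b, hb⟩
      exact ⟨b - a, by rw [ha, hb]; ring⟩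
    have h2 : (2 : ℤ) ∣ (P2 : ℤ) + P1 := by
      rcases hodd1 with ⟨a, ha⟩; rcases hodd2 with ⟨b, hb⟩
      exact ⟨b + a + 1, by rw [ha, hb]; ring⟩
    calc ((2 : ℤ)) ^ (2 * 0 + 2) = 2 * 2 := by norm_num
      _ ∣ ((P2 : ℤ) - P1) * ((P2 : ℤ) + P1) := mul_dvd_mul h1 h2
  · -- main case: show p^(2β+2) ∣ P2 - P1
    have hfp : ∀ j ∈ Jset p (p * r), 2 * j ≠ p * r := by
      intro j hj heq
      by_cases hp2 : p = 2
      · subst hp2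
        have hβ1 : 1 ≤ β := by
          rcases Nat.eq_zero_or_pos β with h | h
          · exact absurd ⟨rfl, h⟩ hcase
          · exact h
        have hρ1 : 1 ≤ ρ := le_trans hβ1 (min_le_left _ _)
        have h2r : 2 ∣ r := dvd_trans (dvd_pow_self 2 (by omega : ρ ≠ 0))
            (by rw [hρ]; exact Nat.ordProj_dvd r 2)
        have hjr : j = r := by omega
        exact (mem_Jset.mp hj).2 (hjr ▸ h2r)
      · have hpd : p ∣ 2 * j := ⟨r, by omega⟩
        rcases (Nat.Prime.dvd_mul hp).mp hpd with h | h
        · exact hp2 ((Nat.prime_dvd_prime_iff_eq hp Nat.prime_two).mp h)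
        · exact (mem_Jset.mp hj).2 h
    have hdiff : ((p : ℤ)) ^ (2 * β + 2) ∣ (P2 : ℤ) - P1 := by
      set D : ℤ := (p : ℤ) ^ (ω + 1) with hD
      have hDpw : D ∣ ((p * w : ℕ) : ℤ) := by
        rw [hD, pow_succ]
        push_cast
        have : (p : ℤ) ^ ω ∣ (w : ℤ) := by
          have h0 := Int.natCast_dvd_natCast.mpr (Nat.ordProj_dvd w p)
          push_cast at h0
          exact h0
        calc (p : ℤ) ^ ω * (p : ℤ) ∣ (w : ℤ) * (p : ℤ) := mul_dvd_mul_right this _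
          _ = (p : ℤ) * (w : ℤ) := by ring
      have hexp := prod_add_sub_sub_dvd D (Jset p (p * r))
        (fun _ => ((p * w : ℕ) : ℤ)) (fun j => (j : ℤ)) (fun j _ => hDpw)
      have hsum : ∑ j ∈ Jset p (p * r), ((p * w : ℕ) : ℤ) * ∏ i ∈ (Jset p (p * r)).erase j, (i : ℤ)
          = ((p * w : ℕ) : ℤ) * ∑ j ∈ Jset p (p * r), ∏ i ∈ (Jset p (p * r)).erase j, (i : ℤ) := by
        rw [Finset.mul_sum]
      have hP2cast : (P2 : ℤ) = ∏ j ∈ Jset p (p * r), (((p * w : ℕ) : ℤ) + (j : ℤ)) := by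
        rw [hP2]; push_cast; rfl
      have hP1cast : (P1 : ℤ) = ∏ j ∈ Jset p (p * r), (j : ℤ) := by
        rw [hP1]; push_cast; rfl
      rw [hsum] at hexp
      -- hexp : D^2 ∣ P2 - P1 - pw * E1
      have hE := E_dvd hp r hfp
      have hterm : ((p : ℤ)) ^ (2 * β + 2) ∣
          ((p * w : ℕ) : ℤ) * ∑ j ∈ Jset p (p * r), ∏ i ∈ (Jset p (p * r)).erase j, (i : ℤ) := by
        have h1 : ((p : ℤ)) ^ (ρ + 1) ∣
            ∑ j ∈ Jset p (p * r), ∏ i ∈ (Jset p (p * r)).erase j, (i : ℤ) := by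
          refine dvd_trans ?_ hE
          have : (p : ℤ) ^ ρ ∣ (r : ℤ) := by
            have h0 := Int.natCast_dvd_natCast.mpr (Nat.ordProj_dvd r p)
            push_cast at h0
            exact h0
          rw [pow_succ]
          push_cast
          calc (p : ℤ) ^ ρ * (p : ℤ) ∣ (r : ℤ) * (p : ℤ) := mul_dvd_mul_right this _
            _ = (p : ℤ) * (r : ℤ) := by ring
        calc ((p : ℤ)) ^ (2 * β + 2) ∣ ((p : ℤ)) ^ (ω + 1) * ((p : ℤ)) ^ (ρ + 1) := by
              rw [← pow_add]
              exact pow_dvd_pow _ (by omega : 2 * β + 2 ≤ ω + 1 + (ρ + 1))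
          _ ∣ ((p * w : ℕ) : ℤ) * ∑ j ∈ Jset p (p * r), ∏ i ∈ (Jset p (p * r)).erase j, (i : ℤ) :=
              mul_dvd_mul hDpw h1
      have hDD : ((p : ℤ)) ^ (2 * β + 2) ∣ D ^ 2 := by
        rw [hD, ← pow_mul]
        exact pow_dvd_pow _ (by omega : 2 * β + 2 ≤ (ω + 1) * 2)
      have := dvd_add (dvd_trans hDD hexp) hterm
      rw [sub_add_cancel] at this
      rw [hP2cast, hP1cast]
      exact this
    rw [hfactor]
    exact hdiff.mul_right _

lemma keyG {p : ℕ} (hp : p.Prime) (r w : ℕ) (hr : 1 ≤ r) (hw : 1 ≤ w) :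
    ((p : ℤ)) ^ (2 * (r + w).factorization p + 2) ∣
      (((p * (r + w)).choose (p * r) : ℕ) : ℤ) ^ 2 - (((r + w).choose r : ℕ) : ℤ) ^ 2 := by
  set c := (r + w).factorization p with hc
  set β := min (r.factorization p) (w.factorization p) with hβ
  have hβc : β ≤ c := by
    have h1 : p ^ β ∣ r := dvd_trans (pow_dvd_pow p (min_le_left _ _)) (Nat.ordProj_dvd r p)
    have h2 : p ^ β ∣ w := dvd_trans (pow_dvd_pow p (min_le_right _ _)) (Nat.ordProj_dvd w p)
    exact (Nat.Prime.pow_dvd_iff_le_factorization hp (by omega : r + w ≠ 0)).mp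
      (Nat.dvd_add h1 h2)
  have hcast : (((p * (r + w)).choose (p * r) : ℕ) : ℤ) * ((∏ j ∈ Jset p (p * r), j : ℕ) : ℤ)
      = (((r + w).choose r : ℕ) : ℤ) * ((∏ j ∈ Jset p (p * r), (p * w + j) : ℕ) : ℤ) := by
    exact_mod_cast congrArg (fun x : ℕ => (x : ℤ)) (key_id hp r w)
  have hid : ((∏ j ∈ Jset p (p * r), j : ℕ) : ℤ) ^ 2
        * ((((p * (r + w)).choose (p * r) : ℕ) : ℤ) ^ 2 - (((r + w).choose r : ℕ) : ℤ) ^ 2)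
      = (((r + w).choose r : ℕ) : ℤ) ^ 2
        * (((∏ j ∈ Jset p (p * r), (p * w + j) : ℕ) : ℤ) ^ 2
          - ((∏ j ∈ Jset p (p * r), j : ℕ) : ℤ) ^ 2) := by
    have hsq := congrArg (fun x : ℤ => x ^ 2) hcast
    simp only [mul_pow] at hsq
    linear_combination hsq
  have hY : ((p : ℤ)) ^ (2 * (c - β)) ∣ (((r + w).choose r : ℕ) : ℤ) ^ 2 := by
    have h0 := Int.natCast_dvd_natCast.mpr (pow_dvd_choose_min hp r w hr hw)
    push_cast at h0
    calc ((p : ℤ)) ^ (2 * (c - β)) = ((p : ℤ) ^ (c - β)) ^ 2 := by rw [← pow_mul]; ring_nf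
      _ ∣ (((r + w).choose r : ℕ) : ℤ) ^ 2 := pow_dvd_pow_of_dvd h0 2
  have hmain : ((p : ℤ)) ^ (2 * c + 2) ∣ ((∏ j ∈ Jset p (p * r), j : ℕ) : ℤ) ^ 2
      * ((((p * (r + w)).choose (p * r) : ℕ) : ℤ) ^ 2 - (((r + w).choose r : ℕ) : ℤ) ^ 2) := by
    rw [hid]
    calc ((p : ℤ)) ^ (2 * c + 2) = ((p : ℤ)) ^ (2 * (c - β)) * ((p : ℤ)) ^ (2 * β + 2) := by
          rw [← pow_add]; congr 1; omega
      _ ∣ _ := mul_dvd_mul hY (P2_sub_P1 hp r w hr hw)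
  have hcop : IsCoprime (((p : ℤ)) ^ (2 * c + 2)) (((∏ j ∈ Jset p (p * r), j : ℕ) : ℤ) ^ 2) := by
    have h1 : Nat.Coprime p (∏ j ∈ Jset p (p * r), j) :=
      (Nat.Prime.coprime_iff_not_dvd hp).mpr (not_dvd_P1 hp _)
    exact (Nat.isCoprime_iff_coprime.mpr h1).pow
  exact hcop.dvd_of_dvd_mul_left hmain

lemma nat_dvd_int_of_prime_pow (N : ℕ) (hN : N ≠ 0) (z : ℤ)
    (h : ∀ p ∈ N.primeFactors, ((p : ℤ)) ^ (N.factorization p) ∣ z) : (N : ℤ) ∣ z := by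
  have hfac : (∏ p ∈ N.primeFactors, p ^ N.factorization p) = N := by
    conv_rhs => rw [← Nat.factorization_prod_pow_eq_self hN]
    rfl
  have hcast : (N : ℤ) = ∏ p ∈ N.primeFactors, ((p : ℤ)) ^ N.factorization p := by
    conv_lhs => rw [← hfac]
    push_cast
    rfl
  rw [hcast]
  apply Finset.prod_dvd_of_coprime
  · intro a ha b hb hab
    have hap : (a : ℕ).Prime := Nat.prime_of_mem_primeFactors ha
    have hbp : (b : ℕ).Prime := Nat.prime_of_mem_primeFactors hb
    have hco : Nat.Coprime a b := (Nat.coprime_primes hap hbp).mpr hab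
    exact (Nat.isCoprime_iff_coprime.mpr hco).pow
  · exact fun p hp => h p hp

end KP

open Finset Nat in
/-- Integrality of the Klemm–Pandharipande invariants of
`Tot(O(-1,-1) ⊕ O(-1,-1) → P¹×P¹)` (Theorem 6.3 for `F₀(2,2)`): for all `d1, d2 ≥ 1`,
`(d1 + d2)²` divides `∑_{k ∣ gcd(d1,d2)} μ(k) C((d1+d2)/k, d1/k)²`. -/
theorem stmt8 (d1 d2 : ℕ) (h1 : 1 ≤ d1) (h2 : 1 ≤ d2) :
    ((d1 + d2 : ℤ) ^ 2) ∣
      ∑ k ∈ (Nat.gcd d1 d2).divisors,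
        ArithmeticFunction.moebius k * (((d1 + d2) / k).choose (d1 / k) : ℤ) ^ 2 := by
  set n := d1 + d2 with hn
  set g := Nat.gcd d1 d2 with hg
  set S : ℤ := ∑ k ∈ g.divisors,
    ArithmeticFunction.moebius k * ((n / k).choose (d1 / k) : ℤ) ^ 2 with hS
  have hn0 : n ≠ 0 := by omega
  have hg0 : g ≠ 0 := Nat.gcd_ne_zero_left (by omega)
  have hgd1 : g ∣ d1 := Nat.gcd_dvd_left _ _
  have hgd2 : g ∣ d2 := Nat.gcd_dvd_right _ _
  have hcast : ((d1 + d2 : ℤ)) ^ 2 = ((n ^ 2 : ℕ) : ℤ) := by push_cast [hn]; ring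
  rw [hcast]
  apply KP.nat_dvd_int_of_prime_pow _ (by positivity) _
  intro p hpmem
  rw [Nat.primeFactors_pow n (by norm_num : (2:ℕ) ≠ 0)] at hpmem
  have hp : p.Prime := Nat.prime_of_mem_primeFactors hpmem
  have hpn : p ∣ n := Nat.dvd_of_mem_primeFactors hpmem
  set e := n.factorization p with he
  have he1 : 1 ≤ e := hp.factorization_pos_of_dvd hn0 hpn
  have hexp : (n ^ 2).factorization p = 2 * e := by
    rw [Nat.factorization_pow]
    simp [he, mul_comm]
  rw [hexp]
  have hpe : p ^ e ∣ n := Nat.ordProj_dvd n p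
  by_cases hpg : p ∣ g
  case neg =>
    -- term-by-term divisibility
    apply Finset.dvd_sum
    intro k hk
    rw [Nat.mem_divisors] at hk
    have hkg : k ∣ g := hk.1
    have hkd1 : k ∣ d1 := hkg.trans hgd1
    have hkd2 : k ∣ d2 := hkg.trans hgd2
    have hkn : k ∣ n := by rw [hn]; exact Nat.dvd_add hkd1 hkd2
    have hk0 : k ≠ 0 := by rintro rfl; exact hg0 (Nat.eq_zero_of_zero_dvd hkg)
    have hpk : ¬ p ∣ k := fun hd => hpg (hd.trans hkg)
    have hcop : Nat.Coprime (p ^ e) k :=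
      Nat.Coprime.pow_left e ((Nat.Prime.coprime_iff_not_dvd hp).mpr hpk)
    have hpen : p ^ e ∣ n / k := by
      have hnk : n = (n / k) * k := (Nat.div_mul_cancel hkn).symm
      exact hcop.dvd_of_dvd_mul_right (hnk ▸ hpe)
    have hdiv : n / k = d1 / k + d2 / k := by
      rw [hn, Nat.add_div_of_dvd_right hkd1]
    have hd1k : 1 ≤ d1 / k := Nat.one_le_div_iff (by omega) |>.mpr (Nat.le_of_dvd h1 hkd1)
    have hd2k : 1 ≤ d2 / k := Nat.one_le_div_iff (by omega) |>.mpr (Nat.le_of_dvd h2 hkd2)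
    have hnotboth : ¬ (p ∣ d1 / k ∧ p ∣ d2 / k) := by
      rintro ⟨ha, hb⟩
      have : p ∣ Nat.gcd (d1 / k) (d2 / k) := Nat.dvd_gcd ha hb
      rw [Nat.gcd_div hkd1 hkd2, ← hg] at this
      exact hpg (this.trans (Nat.div_dvd_of_dvd hkg))
    have hchoose : p ^ e ∣ (n / k).choose (d1 / k) := by
      by_cases hpd1 : p ∣ d1 / k
      · have hpd2 : ¬ p ∣ d2 / k := fun hd => hnotboth ⟨hpd1, hd⟩
        rw [hdiv, Nat.choose_symm_add]
        exact KP.pow_dvd_choose_of_not_dvd hp hd2k (hdiv ▸ hpen) hpd2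
      · exact KP.pow_dvd_choose_of_not_dvd hp hd1k hpen hpd1
    have hc : ((p : ℤ)) ^ (2 * e) ∣ ((n / k).choose (d1 / k) : ℤ) ^ 2 := by
      have h0 := Int.natCast_dvd_natCast.mpr hchoose
      push_cast at h0
      calc ((p : ℤ)) ^ (2 * e) = ((p : ℤ) ^ e) ^ 2 := by rw [← pow_mul]; ring_nf
        _ ∣ _ := pow_dvd_pow_of_dvd h0 2
    exact hc.mul_left _
  case pos =>
    set γ := g.factorization p with hγ
    have hγ1 : 1 ≤ γ := hp.factorization_pos_of_dvd hg0 hpg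
    set g' := g / p ^ γ with hg'
    have hg'dvd : g' ∣ g := Nat.ordCompl_dvd g p
    have hg'0 : g' ≠ 0 := (Nat.ordCompl_pos p hg0).ne'
    have hpg' : ¬ p ∣ g' := Nat.not_dvd_ordCompl hp hg0
    have hgfac : g = p ^ γ * g' := (Nat.ordProj_mul_ordCompl_eq_self g p).symm
    have hdvdg' : ∀ k : ℕ, k ∣ g → ¬ p ∣ k → k ∣ g' := by
      intro k hk hpk
      have hco : Nat.Coprime k (p ^ γ) :=
        Nat.Coprime.pow_right γ (Nat.coprime_comm.mp ((Nat.Prime.coprime_iff_not_dvd hp).mpr hpk))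
      exact hco.dvd_of_dvd_mul_left (hgfac ▸ hk)
    set T2 := g'.divisors.image (fun k => p * k) with hT2
    have hdisj : Disjoint g'.divisors T2 := by
      rw [Finset.disjoint_left]
      intro a ha hb
      rw [hT2, Finset.mem_image] at hb
      obtain ⟨b, hbmem, rfl⟩ := hb
      rw [Nat.mem_divisors] at ha
      exact hpg' ((dvd_mul_right p b).trans ha.1)
    have hpgdvd : p * g' ∣ g := by
      have h0 : p ^ 1 * g' ∣ p ^ γ * g' := mul_dvd_mul_right (pow_dvd_pow p hγ1) g'
      rw [pow_one] at h0
      exact h0.trans (dvd_of_eq hgfac.symm)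
    have hsub : g'.divisors ∪ T2 ⊆ g.divisors := by
      intro a ha
      rw [Finset.mem_union] at ha
      rw [Nat.mem_divisors]
      rcases ha with ha | ha
      · rw [Nat.mem_divisors] at ha
        exact ⟨ha.1.trans hg'dvd, hg0⟩
      · rw [hT2, Finset.mem_image] at ha
        obtain ⟨b, hbmem, rfl⟩ := ha
        rw [Nat.mem_divisors] at hbmem
        exact ⟨(mul_dvd_mul_left p hbmem.1).trans hpgdvd, hg0⟩
    have hzero : ∀ a ∈ g.divisors, a ∉ g'.divisors ∪ T2 →
        ArithmeticFunction.moebius a * ((n / a).choose (d1 / a) : ℤ) ^ 2 = 0 := by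
      intro a ha hnot
      rw [Nat.mem_divisors] at ha
      have hμ : ArithmeticFunction.moebius a = 0 := by
        apply ArithmeticFunction.moebius_eq_zero_of_not_squarefree
        intro hsq
        apply hnot
        rw [Finset.mem_union]
        by_cases hpa : p ∣ a
        · right
          obtain ⟨b, rfl⟩ := hpa
          have hpb : ¬ p ∣ b := by
            intro hd
            have hu := hsq p (mul_dvd_mul_left p hd)
            exact hp.one_lt.ne' (Nat.isUnit_iff.mp hu)
          have hb : b ∣ g' := hdvdg' b (dvd_trans (dvd_mul_left b p) ha.1) hpb
          rw [hT2, Finset.mem_image]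
          exact ⟨b, Nat.mem_divisors.mpr ⟨hb, hg'0⟩, rfl⟩
        · left
          rw [Nat.mem_divisors]
          exact ⟨hdvdg' a ha.1 hpa, hg'0⟩
      rw [hμ]
      push_cast
      ring
    have hre : S = ∑ k ∈ g'.divisors ∪ T2,
        ArithmeticFunction.moebius k * ((n / k).choose (d1 / k) : ℤ) ^ 2 :=
      (Finset.sum_subset hsub hzero).symm
    rw [hre, Finset.sum_union hdisj, hT2,
      Finset.sum_image (fun a _ b _ h => Nat.eq_of_mul_eq_mul_left hp.pos h),
      ← Finset.sum_add_distrib]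
    apply Finset.dvd_sum
    intro k hk
    rw [Nat.mem_divisors] at hk
    have hkg' : k ∣ g' := hk.1
    have hpk : ¬ p ∣ k := fun hd => hpg' (hd.trans hkg')
    have hcopk : Nat.Coprime p k := (Nat.Prime.coprime_iff_not_dvd hp).mpr hpk
    have hpd1 : p ∣ d1 := hpg.trans hgd1
    have hpd2 : p ∣ d2 := hpg.trans hgd2
    have hkd1 : k ∣ d1 := hkg'.trans (hg'dvd.trans hgd1)
    have hkd2 : k ∣ d2 := hkg'.trans (hg'dvd.trans hgd2)
    have hpkd1 : p * k ∣ d1 := hcopk.mul_dvd_of_dvd_of_dvd hpd1 hkd1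
    have hpkd2 : p * k ∣ d2 := hcopk.mul_dvd_of_dvd_of_dvd hpd2 hkd2
    have hpkn : p * k ∣ n := by rw [hn]; exact Nat.dvd_add hpkd1 hpkd2
    have hk0 : 0 < k := Nat.pos_of_ne_zero (fun h => hpk (h ▸ dvd_zero p))
    set r := d1 / (p * k) with hr
    set w := d2 / (p * k) with hw
    have hrw : n / (p * k) = r + w := by
      rw [hn, Nat.add_div_of_dvd_right hpkd1]
    have hr1 : 1 ≤ r := Nat.one_le_div_iff (Nat.mul_pos hp.pos hk0) |>.mpr (Nat.le_of_dvd h1 hpkd1)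
    have hw1 : 1 ≤ w := Nat.one_le_div_iff (Nat.mul_pos hp.pos hk0) |>.mpr (Nat.le_of_dvd h2 hpkd2)
    have hnval : n / k = p * (n / (p * k)) := by
      obtain ⟨t, ht⟩ := hpkn
      rw [ht, show p * k * t = k * (p * t) by ring, Nat.mul_div_cancel_left _ hk0,
        show k * (p * t) = p * k * t by ring, Nat.mul_div_cancel_left _ (Nat.mul_pos hp.pos hk0)]
    have hd1val : d1 / k = p * r := by
      obtain ⟨t, ht⟩ := hpkd1
      rw [hr, ht, show p * k * t = k * (p * t) by ring, Nat.mul_div_cancel_left _ hk0,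
        show k * (p * t) = p * k * t by ring, Nat.mul_div_cancel_left _ (Nat.mul_pos hp.pos hk0)]
    -- p^e ∣ n/k
    have hcop : Nat.Coprime (p ^ e) k := Nat.Coprime.pow_left e hcopk
    have hpen : p ^ e ∣ n / k := by
      have hkn : k ∣ n := by rw [hn]; exact Nat.dvd_add hkd1 hkd2
      have hnk : n = (n / k) * k := (Nat.div_mul_cancel hkn).symm
      exact hcop.dvd_of_dvd_mul_right (hnk ▸ hpe)
    have hfe : e - 1 ≤ (r + w).factorization p := by
      have hm0 : r + w ≠ 0 := by omega
      have hpe1 : p ^ (e - 1) ∣ r + w := by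
        have h0 : p * p ^ (e - 1) ∣ p * (r + w) := by
          rw [← _root_.pow_succ' p (e-1), show e - 1 + 1 = e by omega]
          rw [← hrw, ← hnval]
          exact hpen
        exact (mul_dvd_mul_iff_left (hp.ne_zero : p ≠ 0)).mp h0
      exact (Nat.Prime.pow_dvd_iff_le_factorization hp hm0).mp hpe1
    have hμmul : ArithmeticFunction.moebius (p * k) = - ArithmeticFunction.moebius k := by
      rw [ArithmeticFunction.isMultiplicative_moebius.map_mul_of_coprime hcopk,
        ArithmeticFunction.moebius_apply_prime hp]
      ring
    rw [hμmul, hnval, hd1val, hrw]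
    have hkey := KP.keyG hp r w hr1 hw1
    have hdvd : ((p : ℤ)) ^ (2 * e) ∣
        (((p * (r + w)).choose (p * r) : ℕ) : ℤ) ^ 2 - (((r + w).choose r : ℕ) : ℤ) ^ 2 :=
      dvd_trans (pow_dvd_pow _ (by omega : 2 * e ≤ 2 * (r + w).factorization p + 2)) hkey
    have hterm : ArithmeticFunction.moebius k * (((p * (r + w)).choose (p * r) : ℕ) : ℤ) ^ 2
        + (- ArithmeticFunction.moebius k) * (((r + w).choose r : ℕ) : ℤ) ^ 2
        = ArithmeticFunction.moebius k *
          ((((p * (r + w)).choose (p * r) : ℕ) : ℤ) ^ 2 - (((r + w).choose r : ℕ) : ℤ) ^ 2) := by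
      ring
    rw [hterm]
    exact hdvd.mul_left _
end
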